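/- arXiv:math/0610275 — 4 statements merged into one kernel-verified Lean document; each statement's English description precedes it below -/
import Mathlib

section
/- Let r ≥ 1 be a fixed integer and p_1, ..., p_r be fixed distinct primes. Then the number N(p_1,...,p_r;x) of integers n ≤ x whose squarefree kernel is κ(n) = p_1 ⋯ p_r satisfies N(p_1,...,p_r;x) = (1/r!) (∏_{i=1}^r 1/log p_i) (log x)^r + O((log x)^{r-1}) as x → ∞. -/
open Filter Finset

noncomputable def kcnt (Q : Finset ℕ) (x : ℝ) : ℕ :=
  ((Finset.range (⌊x⌋₊ + 1)).filter (fun n => 0 < n ∧ n.primeFactors = Q)).card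

lemma mem_kcnt {Q : Finset ℕ} {x : ℝ} {n : ℕ} :
    n ∈ (Finset.range (⌊x⌋₊ + 1)).filter (fun n => 0 < n ∧ n.primeFactors = Q) ↔
      0 < n ∧ n.primeFactors = Q ∧ (n : ℝ) ≤ x := by
  simp only [Finset.mem_filter, Finset.mem_range, Nat.lt_succ_iff]
  constructor
  · rintro ⟨h1, h2, h3⟩
    refine ⟨h2, h3, ?_⟩
    have hx : (0:ℝ) ≤ x := by
      by_contra h
      push_neg at h
      have h0 : ⌊x⌋₊ = 0 := Nat.floor_of_nonpos h.le
      omega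
    calc (n:ℝ) ≤ (⌊x⌋₊ : ℝ) := by exact_mod_cast h1
    _ ≤ x := Nat.floor_le hx
  · rintro ⟨h2, h3, h4⟩
    exact ⟨Nat.le_floor h4, h2, h3⟩

lemma kcnt_empty (x : ℝ) : kcnt ∅ x = if 1 ≤ x then 1 else 0 := by
  unfold kcnt
  split_ifs with h
  · rw [show ((Finset.range (⌊x⌋₊ + 1)).filter
        (fun n => 0 < n ∧ n.primeFactors = (∅ : Finset ℕ))) = {1} from ?_]
    · rfl
    · ext n
      rw [mem_kcnt, Finset.mem_singleton]
      constructor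
      · rintro ⟨h1, h2, h3⟩
        rcases Nat.primeFactors_eq_empty.mp h2 with rfl | rfl
        · omega
        · rfl
      · rintro rfl
        exact ⟨one_pos, Nat.primeFactors_one, by exact_mod_cast h⟩
  · rw [Finset.card_eq_zero.mpr]
    ext n
    rw [mem_kcnt]
    simp only [Finset.notMem_empty, iff_false]
    rintro ⟨h1, h2, h3⟩
    rcases Nat.primeFactors_eq_empty.mp h2 with rfl | rfl
    · omega
    · exact h (by exact_mod_cast h3)

lemma fact_q {q a m : ℕ} (hq : q.Prime) (hm : m ≠ 0) (hqm : ¬ q ∣ m) :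
    (q ^ a * m).factorization q = a := by
  rw [Nat.factorization_mul (pow_ne_zero _ hq.pos.ne') hm, Finsupp.add_apply,
    Nat.Prime.factorization_pow hq, Nat.factorization_eq_zero_of_not_dvd hqm]
  simp

lemma kcnt_insert {q : ℕ} (hq : q.Prime) {Q : Finset ℕ} (hqQ : q ∉ Q) (x : ℝ) :
    kcnt (insert q Q) x =
      ∑ a ∈ Finset.Icc 1 ⌊Real.log x / Real.log q⌋₊, kcnt Q (x / (q : ℝ) ^ a) := by
  have hq0 : (0:ℝ) < (q:ℝ) := by exact_mod_cast hq.pos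
  have hq1 : (1:ℝ) < (q:ℝ) := by exact_mod_cast hq.one_lt
  have hlq : 0 < Real.log q := Real.log_pos hq1
  set A := ⌊Real.log x / Real.log q⌋₊ with hA
  have key : ((Finset.range (⌊x⌋₊ + 1)).filter
        (fun n => 0 < n ∧ n.primeFactors = insert q Q)) =
      (Finset.Icc 1 A).biUnion (fun a =>
        ((Finset.range (⌊x / (q:ℝ)^a⌋₊ + 1)).filter
          (fun n => 0 < n ∧ n.primeFactors = Q)).image (fun m => q ^ a * m)) := by
    ext n
    rw [mem_kcnt]
    simp only [Finset.mem_biUnion, Finset.mem_image, Finset.mem_Icc]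
    constructor
    · rintro ⟨hn, hpf, hnx⟩
      set a := n.factorization q with ha
      have hqn : q ∣ n := by
        have : q ∈ n.primeFactors := by rw [hpf]; exact Finset.mem_insert_self _ _
        exact Nat.dvd_of_mem_primeFactors this
      have ha1 : 1 ≤ a := hq.factorization_pos_of_dvd hn.ne' hqn
      set m := n / q ^ a with hmdef
      have hsplit : q ^ a * m = n := Nat.ordProj_mul_ordCompl_eq_self n q
      have hqm : ¬ q ∣ m := Nat.not_dvd_ordCompl hq hn.ne'
      have hm0 : 0 < m := Nat.ordCompl_pos q hn.ne'
      have hqmem : q ∉ m.primeFactors := fun h => hqm (Nat.dvd_of_mem_primeFactors h)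
      have hpfm : m.primeFactors = Q := by
        have h1 : n.primeFactors = insert q m.primeFactors := by
          rw [← hsplit, Nat.primeFactors_mul (pow_ne_zero _ hq.pos.ne') hm0.ne',
            Nat.primeFactors_prime_pow (by omega) hq, ← Finset.insert_eq]
        have h2 : insert q m.primeFactors = insert q Q := by rw [← h1, hpf]
        calc m.primeFactors = (insert q m.primeFactors).erase q :=
              (Finset.erase_insert hqmem).symm
          _ = (insert q Q).erase q := by rw [h2]
          _ = Q := Finset.erase_insert hqQ
      have hqa_le : ((q:ℝ)) ^ a ≤ x := by
        refine le_trans ?_ hnx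
        exact_mod_cast Nat.le_of_dvd hn (Nat.ordProj_dvd n q)
      have haA : a ≤ A := by
        apply Nat.le_floor
        rw [le_div_iff₀ hlq]
        calc (a:ℝ) * Real.log q = Real.log ((q:ℝ) ^ a) := by rw [Real.log_pow]
          _ ≤ Real.log x := Real.log_le_log (by positivity) hqa_le
      refine ⟨a, ⟨ha1, haA⟩, m, ?_, hsplit⟩
      rw [mem_kcnt]
      refine ⟨hm0, hpfm, ?_⟩
      rw [le_div_iff₀ (by positivity)]
      calc (m:ℝ) * (q:ℝ)^a = ((q ^ a * m : ℕ) : ℝ) := by push_cast; ring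
        _ = (n:ℝ) := by rw [hsplit]
        _ ≤ x := hnx
    · rintro ⟨a, ⟨ha1, haA⟩, m, hm, rfl⟩
      rw [mem_kcnt] at hm
      obtain ⟨hm0, hpfm, hmx⟩ := hm
      refine ⟨Nat.mul_pos (pow_pos hq.pos a) hm0, ?_, ?_⟩
      · rw [Nat.primeFactors_mul (pow_ne_zero _ hq.pos.ne') hm0.ne',
          Nat.primeFactors_prime_pow (by omega) hq, ← Finset.insert_eq, hpfm]
      · rw [le_div_iff₀ (by positivity)] at hmx
        calc ((q ^ a * m : ℕ) : ℝ) = (m:ℝ) * (q:ℝ)^a := by push_cast; ring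
          _ ≤ x := hmx
  have hdisj : ∀ a ∈ Finset.Icc 1 A, ∀ b ∈ Finset.Icc 1 A, a ≠ b →
      Disjoint (((Finset.range (⌊x / (q:ℝ)^a⌋₊ + 1)).filter
          (fun n => 0 < n ∧ n.primeFactors = Q)).image (fun m => q ^ a * m))
        (((Finset.range (⌊x / (q:ℝ)^b⌋₊ + 1)).filter
          (fun n => 0 < n ∧ n.primeFactors = Q)).image (fun m => q ^ b * m)) := by
    intro a _ b _ hab
    rw [Finset.disjoint_left]
    rintro n hna hnb
    apply hab
    obtain ⟨ma, hma, rfl⟩ := Finset.mem_image.mp hna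
    obtain ⟨mb, hmb, hmbe⟩ := Finset.mem_image.mp hnb
    rw [mem_kcnt] at hma hmb
    have hqa : ¬ q ∣ ma := fun h =>
      hqQ (hma.2.1 ▸ Nat.mem_primeFactors.mpr ⟨hq, h, hma.1.ne'⟩)
    have hqb : ¬ q ∣ mb := fun h =>
      hqQ (hmb.2.1 ▸ Nat.mem_primeFactors.mpr ⟨hq, h, hmb.1.ne'⟩)
    calc a = (q ^ a * ma).factorization q := (fact_q hq hma.1.ne' hqa).symm
      _ = (q ^ b * mb).factorization q := by rw [hmbe]
      _ = b := fact_q hq hmb.1.ne' hqb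
  rw [kcnt, key, Finset.card_biUnion hdisj]
  refine Finset.sum_congr rfl fun a _ => ?_
  rw [Finset.card_image_of_injective _ (mul_right_injective₀ (pow_ne_zero a hq.pos.ne'))]
  rfl

lemma key_upper {a b : ℝ} (k : ℕ) (hb : 0 ≤ b) (hab : b ≤ a) :
    a ^ (k+1) - b ^ (k+1) ≤ (k+1 : ℝ) * a ^ k * (a - b) := by
  have ha : 0 ≤ a := hb.trans hab
  have h := geom_sum₂_mul a b (k+1)
  rw [← h]
  have hsum : ∑ i ∈ range (k+1), a ^ i * b ^ (k + 1 - 1 - i) ≤ (k+1 : ℝ) * a ^ k := by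
    calc ∑ i ∈ range (k+1), a ^ i * b ^ (k + 1 - 1 - i)
        ≤ ∑ _i ∈ range (k+1), a ^ k := by
          apply Finset.sum_le_sum
          intro i hi
          have hik : i ≤ k := by simpa [Nat.lt_succ_iff] using hi
          calc a ^ i * b ^ (k + 1 - 1 - i) ≤ a ^ i * a ^ (k + 1 - 1 - i) := by
                apply mul_le_mul_of_nonneg_left (pow_le_pow_left₀ hb hab _) (pow_nonneg ha i)
            _ = a ^ k := by rw [← pow_add]; congr 1; omega
      _ = (k+1 : ℝ) * a ^ k := by
          rw [Finset.sum_const, Finset.card_range, nsmul_eq_mul]; push_cast; ring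
  exact mul_le_mul_of_nonneg_right hsum (by linarith)

lemma key_lower {a b : ℝ} (k : ℕ) (hb : 0 ≤ b) (hab : b ≤ a) :
    (k+1 : ℝ) * b ^ k * (a - b) ≤ a ^ (k+1) - b ^ (k+1) := by
  have ha : 0 ≤ a := hb.trans hab
  have h := geom_sum₂_mul a b (k+1)
  rw [← h]
  have hsum : (k+1 : ℝ) * b ^ k ≤ ∑ i ∈ range (k+1), a ^ i * b ^ (k + 1 - 1 - i) := by
    calc (k+1 : ℝ) * b ^ k = ∑ _i ∈ range (k+1), b ^ k := by
          rw [Finset.sum_const, Finset.card_range, nsmul_eq_mul]; push_cast; ring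
      _ ≤ ∑ i ∈ range (k+1), a ^ i * b ^ (k + 1 - 1 - i) := by
          apply Finset.sum_le_sum
          intro i hi
          have hik : i ≤ k := by simpa [Nat.lt_succ_iff] using hi
          calc b ^ k = b ^ i * b ^ (k + 1 - 1 - i) := by rw [← pow_add]; congr 1; omega
            _ ≤ a ^ i * b ^ (k + 1 - 1 - i) := by
                apply mul_le_mul_of_nonneg_right (pow_le_pow_left₀ hb hab _)
                  (pow_nonneg hb _)
  exact mul_le_mul_of_nonneg_right hsum (by linarith)

lemma kcnt_small {Q : Finset ℕ} {x : ℝ} (hx : x < 1) : kcnt Q x = 0 := by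
  rw [kcnt, Finset.card_eq_zero]
  ext n
  rw [mem_kcnt]
  simp only [Finset.notMem_empty, iff_false]
  rintro ⟨h1, _, h3⟩
  have : (1:ℝ) ≤ n := by exact_mod_cast h1
  linarith

lemma kcnt_upper (Q : Finset ℕ) (hQ : ∀ p ∈ Q, Nat.Prime p) (x : ℝ) :
    (∏ p ∈ Q, Real.log p) * kcnt Q x ≤
      max (Real.log x) 0 ^ Q.card / (Q.card).factorial := by
  induction Q using Finset.induction_on generalizing x with
  | empty =>
      simp only [Finset.prod_empty, Finset.card_empty, pow_zero, Nat.factorial_zero,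
        Nat.cast_one, one_mul, div_one, kcnt_empty]
      split_ifs <;> norm_num
  | @insert q Q hqQ IH =>
      have hq : q.Prime := hQ q (Finset.mem_insert_self _ _)
      have hQ' : ∀ p ∈ Q, Nat.Prime p := fun p hp => hQ p (Finset.mem_insert_of_mem hp)
      have hq1 : (1:ℝ) < (q:ℝ) := by exact_mod_cast hq.one_lt
      have hc : 0 < Real.log q := Real.log_pos hq1
      set c := Real.log q
      have hPnn : 0 ≤ ∏ p ∈ Q, Real.log (p:ℝ) := by
        apply Finset.prod_nonneg
        intro p hp
        exact Real.log_nonneg (by exact_mod_cast (hQ' p hp).one_lt.le)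
      rcases lt_or_ge x 1 with hx | hx
      · rw [kcnt_small hx]
        push_cast
        rw [mul_zero]
        positivity
      · set T := Real.log x with hT
        have hT0 : 0 ≤ T := Real.log_nonneg hx
        set r := Q.card with hrdef
        set A := ⌊T / c⌋₊ with hAdef
        have hterm : ∀ a ∈ Finset.Icc 1 A,
            (∏ p ∈ Q, Real.log (p:ℝ)) * (kcnt Q (x / (q:ℝ) ^ a) : ℝ)
              ≤ (T - a * c) ^ r / r.factorial := by
          intro a ha
          have haA : a ≤ A := (Finset.mem_Icc.mp ha).2
          have haT : (a:ℝ) * c ≤ T := by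
            have h1 : (a:ℝ) ≤ T / c := le_trans (by exact_mod_cast haA)
              (Nat.floor_le (by positivity))
            calc (a:ℝ) * c ≤ (T / c) * c := by nlinarith
              _ = T := by field_simp
          have h := IH hQ' (x / (q:ℝ) ^ a)
          rwa [Real.log_div (by positivity) (by positivity), Real.log_pow,
            max_eq_left (by linarith)] at h
        rw [kcnt_insert hq hqQ, Finset.prod_insert hqQ, Finset.card_insert_of_notMem hqQ]
        push_cast
        rw [mul_assoc, Finset.mul_sum]
        have step1 : ∑ a ∈ Finset.Icc 1 A, (∏ p ∈ Q, Real.log (p:ℝ)) * (kcnt Q (x / (q:ℝ) ^ a) : ℝ)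
            ≤ ∑ a ∈ Finset.Icc 1 A, (T - a * c) ^ r / r.factorial :=
          Finset.sum_le_sum hterm
        have htel : c * ((r:ℝ)+1) * ∑ a ∈ Finset.Icc 1 A, (T - a * c) ^ r ≤ T ^ (r+1) := by
          have hper : ∀ i ∈ Finset.range A,
              c * ((r:ℝ)+1) * (T - (1+i) * c) ^ r
                ≤ (T - i * c) ^ (r+1) - (T - (1+i) * c) ^ (r+1) := by
            intro i hi
            have hiA : i + 1 ≤ A := Finset.mem_range.mp hi
            have hb0 : 0 ≤ T - (1+i) * c := by
              have h1 : ((i:ℝ)+1) ≤ T / c := le_trans (by exact_mod_cast hiA)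
                (Nat.floor_le (by positivity))
              have := mul_le_mul_of_nonneg_right h1 hc.le
              rw [div_mul_cancel₀ _ hc.ne'] at this
              linarith
            have hab : T - (1+i) * c ≤ T - i * c := by nlinarith
            have hk := key_lower r hb0 hab
            calc c * ((r:ℝ)+1) * (T - (1+i) * c) ^ r
                = ((r:ℝ)+1) * (T - (1+i)*c) ^ r * ((T - i*c) - (T - (1+i)*c)) := by ring
              _ ≤ _ := hk
          calc c * ((r:ℝ)+1) * ∑ a ∈ Finset.Icc 1 A, (T - a * c) ^ r
              = ∑ i ∈ Finset.range A, c * ((r:ℝ)+1) * (T - (1+i) * c) ^ r := by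
                rw [Finset.mul_sum]
                rw [show Finset.Icc 1 A = Finset.Ico 1 (A+1) by rfl, Finset.sum_Ico_eq_sum_range]
                simp only [Nat.add_sub_cancel]
                apply Finset.sum_congr rfl
                intro i _
                push_cast
                ring
            _ ≤ ∑ i ∈ Finset.range A, ((T - i * c) ^ (r+1) - (T - (1+i) * c) ^ (r+1)) :=
                Finset.sum_le_sum hper
            _ = (T - (0:ℕ) * c) ^ (r+1) - (T - A * c) ^ (r+1) := by
                have := Finset.sum_range_sub' (fun i => (T - (i:ℝ) * c) ^ (r+1)) A
                rw [← this]
                apply Finset.sum_congr rfl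
                intro i _
                push_cast
                ring_nf
            _ ≤ T ^ (r+1) := by
                have hA0 : 0 ≤ T - A * c := by
                  rcases Nat.eq_zero_or_pos A with h | h
                  · simp [h]; linarith
                  · have h1 : (A:ℝ) ≤ T / c := Nat.floor_le (by positivity)
                    have := mul_le_mul_of_nonneg_right h1 hc.le
                    rw [div_mul_cancel₀ _ hc.ne'] at this
                    linarith
                have : 0 ≤ (T - A * c) ^ (r+1) := pow_nonneg hA0 _
                push_cast
                simp only [zero_mul, sub_zero]
                linarith
        rw [max_eq_left hT0]
        have hfact : ((r+1).factorial : ℝ) = ((r:ℝ)+1) * r.factorial := by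
          rw [Nat.factorial_succ]; push_cast; ring
        have hfr : (0:ℝ) < r.factorial := by exact_mod_cast r.factorial_pos
        calc c * ∑ a ∈ Finset.Icc 1 A, (∏ p ∈ Q, Real.log (p:ℝ)) * (kcnt Q (x / (q:ℝ) ^ a) : ℝ)
            ≤ c * ∑ a ∈ Finset.Icc 1 A, (T - a * c) ^ r / r.factorial := by
              apply mul_le_mul_of_nonneg_left step1 hc.le
          _ = (c * ((r:ℝ)+1) * ∑ a ∈ Finset.Icc 1 A, (T - a * c) ^ r) / (((r:ℝ)+1) * r.factorial) := by
              rw [← Finset.sum_div]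
              field_simp
          _ ≤ T ^ (r+1) / (((r:ℝ)+1) * r.factorial) := by
              apply div_le_div_of_nonneg_right htel ?_ |>.trans_eq rfl
              positivity
          _ = T ^ (r+1) / ((r+1).factorial : ℝ) := by rw [hfact]

lemma kcnt_lower (Q : Finset ℕ) (hQ : ∀ p ∈ Q, Nat.Prime p) (x : ℝ) (hx : 1 ≤ x)
    (hS : (∑ p ∈ Q, Real.log p) ≤ Real.log x) :
    (Real.log x - ∑ p ∈ Q, Real.log p) ^ Q.card / (Q.card).factorial ≤
      (∏ p ∈ Q, Real.log p) * kcnt Q x := by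
  induction Q using Finset.induction_on generalizing x with
  | empty =>
      simp only [Finset.sum_empty, Finset.prod_empty, Finset.card_empty, pow_zero,
        Nat.factorial_zero, Nat.cast_one, one_mul, div_one, kcnt_empty, if_pos hx,
        Nat.cast_one, le_refl]
  | @insert q Q hqQ IH =>
      have hq : q.Prime := hQ q (Finset.mem_insert_self _ _)
      have hQ' : ∀ p ∈ Q, Nat.Prime p := fun p hp => hQ p (Finset.mem_insert_of_mem hp)
      have hq1 : (1:ℝ) < (q:ℝ) := by exact_mod_cast hq.one_lt
      have hc : 0 < Real.log q := Real.log_pos hq1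
      set c := Real.log q with hcdef
      have hSnn : 0 ≤ ∑ p ∈ Q, Real.log (p:ℝ) := by
        apply Finset.sum_nonneg
        intro p hp
        exact Real.log_nonneg (by exact_mod_cast (hQ' p hp).one_lt.le)
      have hPnn : 0 ≤ ∏ p ∈ Q, Real.log (p:ℝ) := by
        apply Finset.prod_nonneg
        intro p hp
        exact Real.log_nonneg (by exact_mod_cast (hQ' p hp).one_lt.le)
      rw [Finset.sum_insert hqQ] at hS
      set T := Real.log x with hT
      have hT0 : 0 ≤ T := Real.log_nonneg hx
      set S := ∑ p ∈ Q, Real.log (p:ℝ) with hSdef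
      set r := Q.card with hrdef
      set A := ⌊T / c⌋₊ with hAdef
      set g : ℕ → ℝ := fun a => max (T - a * c - S) 0 with hgdef
      have hgnn : ∀ a, 0 ≤ g a := fun a => le_max_right _ _
      have hgmono : ∀ a : ℕ, g (a+1) ≤ g a := by
        intro a
        apply max_le_max_right
        push_cast
        nlinarith
      have hgdiff : ∀ a : ℕ, g a - g (a+1) ≤ c := by
        intro a
        simp only [hgdef]
        rcases le_total (T - (a:ℝ) * c - S) 0 with h | h
        · rw [max_eq_right h]
          have : max (T - ((a:ℕ)+1:ℕ) * c - S) 0 = 0 := by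
            apply max_eq_right
            push_cast
            nlinarith
          rw [this]; linarith
        · rw [max_eq_left h]
          have h2 : T - (((a:ℕ)+1:ℕ):ℝ) * c - S ≤ max (T - (((a:ℕ)+1:ℕ):ℝ) * c - S) 0 :=
            le_max_left _ _
          push_cast at h2 ⊢
          nlinarith [le_max_left (T - ((a:ℝ)+1) * c - S) 0]
      have hterm : ∀ a ∈ Finset.Icc 1 A,
          g a ^ r / r.factorial ≤ (∏ p ∈ Q, Real.log (p:ℝ)) * (kcnt Q (x / (q:ℝ) ^ a) : ℝ) := by
        intro a ha
        have haA : a ≤ A := (Finset.mem_Icc.mp ha).2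
        have haT : (a:ℝ) * c ≤ T := by
          have h1 : (a:ℝ) ≤ T / c := le_trans (by exact_mod_cast haA)
            (Nat.floor_le (by positivity))
          calc (a:ℝ) * c ≤ (T / c) * c := by nlinarith
            _ = T := by field_simp
        rcases le_or_gt S (T - a * c) with hcase | hcase
        · -- use IH
          have hx' : (1:ℝ) ≤ x / (q:ℝ) ^ a := by
            by_contra hlt
            push_neg at hlt
            have hxq : 0 < x / (q:ℝ) ^ a := by positivity
            have : Real.log (x / (q:ℝ) ^ a) < 0 := Real.log_neg hxq hlt
            rw [Real.log_div (by positivity) (by positivity), Real.log_pow] at this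
            nlinarith
          have hS' : S ≤ Real.log (x / (q:ℝ) ^ a) := by
            rw [Real.log_div (by positivity) (by positivity), Real.log_pow]
            linarith
          have h := IH hQ' (x / (q:ℝ) ^ a) hx' hS'
          rw [Real.log_div (by positivity) (by positivity), Real.log_pow] at h
          have hg : g a = T - a * c - S := max_eq_left (by linarith)
          rw [hg]
          exact h
        · -- g a = 0 and r ≥ 1
          have hg : g a = 0 := max_eq_right (by linarith)
          have hr1 : 1 ≤ r := by
            by_contra hr
            push_neg at hr
            interval_cases r
            have hQe : Q = ∅ := Finset.card_eq_zero.mp hrdef.symm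
            rw [hQe] at hSdef
            simp only [Finset.sum_empty] at hSdef
            rw [hSdef] at hcase
            linarith
          rw [hg, zero_pow (by omega), zero_div]
          exact mul_nonneg hPnn (Nat.cast_nonneg _)
      -- telescoping lower bound
      have hgA1 : g (A + 1) = 0 := by
        apply max_eq_right
        have h1 : T / c < (A:ℝ) + 1 := Nat.lt_floor_add_one _
        have h2 : T < ((A:ℝ) + 1) * c := by
          calc T = (T / c) * c := by field_simp
            _ < ((A:ℝ) + 1) * c := by nlinarith
        push_cast
        nlinarith
      have hg1 : g 1 = T - c - S := by
        simp only [hgdef, Nat.cast_one, one_mul]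
        exact max_eq_left (by linarith)
      have htel : (T - (c + S)) ^ (r+1) ≤ ((r:ℝ)+1) * c * ∑ a ∈ Finset.Icc 1 A, g a ^ r := by
        have hper : ∀ i ∈ Finset.range A,
            g (1+i) ^ (r+1) - g (1+(i+1)) ^ (r+1) ≤ ((r:ℝ)+1) * c * g (1+i) ^ r := by
          intro i _
          have hk := key_upper r (hgnn (1+i+1)) (hgmono (1+i))
          calc g (1+i) ^ (r+1) - g (1+(i+1)) ^ (r+1)
              ≤ ((r:ℝ)+1) * g (1+i) ^ r * (g (1+i) - g (1+(i+1))) := hk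
            _ ≤ ((r:ℝ)+1) * g (1+i) ^ r * c := by
                apply mul_le_mul_of_nonneg_left (show g (1+i) - g (1+(i+1)) ≤ c from hgdiff (1+i))
                positivity
            _ = ((r:ℝ)+1) * c * g (1+i) ^ r := by ring
        calc (T - (c + S)) ^ (r+1) = g 1 ^ (r+1) - g (A+1) ^ (r+1) := by
              rw [hg1, hgA1, zero_pow (by omega)]
              ring_nf
          _ = ∑ i ∈ Finset.range A, (g (1+i) ^ (r+1) - g (1+(i+1)) ^ (r+1)) := by
              rw [Finset.sum_range_sub' (fun i => g (1+i) ^ (r+1)) A]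
              simp [Nat.add_comm 1 A]
          _ ≤ ∑ i ∈ Finset.range A, ((r:ℝ)+1) * c * g (1+i) ^ r :=
              Finset.sum_le_sum hper
          _ = ((r:ℝ)+1) * c * ∑ a ∈ Finset.Icc 1 A, g a ^ r := by
              rw [Finset.mul_sum]
              rw [show Finset.Icc 1 A = Finset.Ico 1 (A+1) by rfl, Finset.sum_Ico_eq_sum_range]
              simp only [Nat.add_sub_cancel]
      -- assemble
      rw [kcnt_insert hq hqQ, Finset.prod_insert hqQ, Finset.card_insert_of_notMem hqQ,
        Finset.sum_insert hqQ]
      push_cast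
      rw [mul_assoc, Finset.mul_sum]
      have hfact : ((r+1).factorial : ℝ) = ((r:ℝ)+1) * r.factorial := by
        rw [Nat.factorial_succ]; push_cast; ring
      have hfr : (0:ℝ) < r.factorial := by exact_mod_cast r.factorial_pos
      calc (T - (c + S)) ^ (r+1) / ((r+1).factorial : ℝ)
          = (T - (c + S)) ^ (r+1) / (((r:ℝ)+1) * r.factorial) := by rw [hfact]
        _ ≤ (((r:ℝ)+1) * c * ∑ a ∈ Finset.Icc 1 A, g a ^ r) / (((r:ℝ)+1) * r.factorial) := by
            apply div_le_div_of_nonneg_right htel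
            positivity
        _ = c * ∑ a ∈ Finset.Icc 1 A, g a ^ r / r.factorial := by
            rw [Finset.mul_sum, Finset.mul_sum, Finset.sum_div]
            refine Finset.sum_congr rfl fun a _ => ?_
            field_simp
        _ ≤ c * ∑ a ∈ Finset.Icc 1 A, (∏ p ∈ Q, Real.log (p:ℝ)) * (kcnt Q (x / (q:ℝ) ^ a) : ℝ) := by
            apply mul_le_mul_of_nonneg_left (Finset.sum_le_sum hterm) hc.le

/-- **Corollary 1.** For fixed `r ≥ 1` and fixed distinct primes `p 1, ..., p r`, the
number `N(p_1,...,p_r;x)` of integers `n ≤ x` whose squarefree kernel is `p_1 ⋯ p_r`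
(i.e. whose set of prime factors is exactly `{p_1, ..., p_r}`) satisfies
`N(p_1,...,p_r;x) = (1/r!) (∏ i, 1/log p_i) (log x)^r + O((log x)^{r-1})` as `x → ∞`. -/
theorem kernel_count_asymptotic
    (r : ℕ) (hr : 1 ≤ r) (p : Fin r → ℕ)
    (hp : ∀ i, (p i).Prime) (hinj : Function.Injective p) :
    (fun x : ℝ =>
        (Set.ncard {n : ℕ | (n : ℝ) ≤ x ∧
            n.primeFactors = Finset.image p Finset.univ} : ℝ) -
          (1 / (r.factorial : ℝ)) * (∏ i, 1 / Real.log (p i)) * Real.log x ^ r)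
      =O[atTop] (fun x : ℝ => Real.log x ^ (r - 1)) := by
  obtain ⟨k, rfl⟩ : ∃ k, r = k + 1 := ⟨r - 1, by omega⟩
  set Q : Finset ℕ := Finset.image p Finset.univ with hQdef
  have hQprime : ∀ a ∈ Q, Nat.Prime a := by
    intro a ha
    obtain ⟨i, _, rfl⟩ := Finset.mem_image.mp ha
    exact hp i
  have hQcard : Q.card = k + 1 := by
    rw [hQdef, Finset.card_image_of_injective _ hinj, Finset.card_univ, Fintype.card_fin]
  set S := ∑ a ∈ Q, Real.log (a:ℝ) with hSdef
  set P := ∏ a ∈ Q, Real.log (a:ℝ) with hPdef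
  have hSnn : 0 ≤ S := Finset.sum_nonneg fun a ha =>
    Real.log_nonneg (by exact_mod_cast (hQprime a ha).one_lt.le)
  have hPpos : 0 < P := Finset.prod_pos fun a ha =>
    Real.log_pos (by exact_mod_cast (hQprime a ha).one_lt)
  have hprod : (∏ i, 1 / Real.log (p i)) = 1 / P := by
    rw [hPdef, hQdef, Finset.prod_image (fun i _ j _ h => hinj h)]
    rw [one_div, ← Finset.prod_inv_distrib]
    simp [one_div]
  have hset : ∀ x : ℝ, {n : ℕ | (n : ℝ) ≤ x ∧ n.primeFactors = Q} =
      ↑((Finset.range (⌊x⌋₊ + 1)).filter (fun n => 0 < n ∧ n.primeFactors = Q)) := by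
    intro x
    ext n
    simp only [Set.mem_setOf_eq, Finset.mem_coe]
    rw [mem_kcnt]
    constructor
    · rintro ⟨h1, h2⟩
      refine ⟨?_, h2, h1⟩
      rcases Nat.eq_zero_or_pos n with rfl | h
      · exfalso
        rw [Nat.primeFactors_zero] at h2
        have : p ⟨0, hr⟩ ∈ Q := Finset.mem_image.mpr ⟨⟨0, hr⟩, Finset.mem_univ _, rfl⟩
        rw [← h2] at this
        exact Finset.notMem_empty _ this
      · exact h
    · rintro ⟨h1, h2, h3⟩
      exact ⟨h3, h2⟩
  have hncard : ∀ x : ℝ, Set.ncard {n : ℕ | (n : ℝ) ≤ x ∧ n.primeFactors = Q}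
      = kcnt Q x := by
    intro x
    rw [hset x, Set.ncard_coe_finset]
    rfl
  rw [Asymptotics.isBigO_iff]
  refine ⟨((k:ℝ)+1) * S / ((k+1).factorial * P), ?_⟩
  filter_upwards [Filter.eventually_ge_atTop (Real.exp (max S 1))] with x hx
  have hxpos : (0:ℝ) < x := lt_of_lt_of_le (Real.exp_pos _) hx
  have hTge : max S 1 ≤ Real.log x := (Real.le_log_iff_exp_le hxpos).mpr hx
  set T := Real.log x with hT
  have hTS : S ≤ T := le_trans (le_max_left _ _) hTge
  have hT1 : (1:ℝ) ≤ T := le_trans (le_max_right _ _) hTge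
  have hT0 : 0 ≤ T := by linarith
  have hx1 : (1:ℝ) ≤ x := by
    by_contra h
    push_neg at h
    have := Real.log_neg hxpos h
    linarith
  have hup := kcnt_upper Q hQprime x
  rw [max_eq_left hT0, hQcard] at hup
  have hlo := kcnt_lower Q hQprime x hx1 hTS
  rw [hQcard] at hlo
  have hfpos : (0:ℝ) < ((k+1).factorial : ℝ) := by exact_mod_cast (k+1).factorial_pos
  -- the difference
  rw [hncard x, hprod]
  have hkey : T ^ (k+1) - (T - S) ^ (k+1) ≤ ((k:ℝ)+1) * T ^ k * S := by
    have := key_upper k (a := T) (b := T - S) (by linarith) (by linarith)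
    calc T ^ (k+1) - (T - S) ^ (k+1) ≤ ((k:ℝ)+1) * T ^ k * (T - (T - S)) := this
      _ = ((k:ℝ)+1) * T ^ k * S := by ring
  have habs : |(kcnt Q x : ℝ) - 1 / ((k+1).factorial : ℝ) * (1 / P) * T ^ (k+1)|
      ≤ ((k:ℝ)+1) * S / ((k+1).factorial * P) * T ^ k := by
    rw [abs_le]
    constructor
    · -- lower: cnt ≥ (T-S)^(k+1)/((k+1)! P)
      have h1 : (T - S) ^ (k+1) / ((k+1).factorial : ℝ) / P ≤ (kcnt Q x : ℝ) := by
        rw [div_le_iff₀ hPpos] at *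
        calc (T - S) ^ (k+1) / ((k+1).factorial : ℝ) ≤ P * kcnt Q x := hlo
          _ = (kcnt Q x : ℝ) * P := by ring
      have h2 : T ^ (k+1) - (T - S) ^ (k+1) ≤ ((k:ℝ)+1) * S * T ^ k := by
        nlinarith [hkey]
      rw [neg_le, neg_sub]
      calc 1 / ((k+1).factorial : ℝ) * (1 / P) * T ^ (k+1) - (kcnt Q x : ℝ)
          ≤ T ^ (k+1) / (((k+1).factorial : ℝ) * P) - (T - S) ^ (k+1) / (((k+1).factorial:ℝ) * P) := by
            have : (T - S) ^ (k+1) / (((k+1).factorial:ℝ) * P) ≤ (kcnt Q x : ℝ) := by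
              rw [div_mul_eq_div_div]
              exact h1
            have heq : 1 / ((k+1).factorial : ℝ) * (1 / P) * T ^ (k+1)
                = T ^ (k+1) / (((k+1).factorial : ℝ) * P) := by field_simp
            linarith [heq ▸ le_refl (1 / ((k+1).factorial : ℝ) * (1 / P) * T ^ (k+1))]
        _ = (T ^ (k+1) - (T - S) ^ (k+1)) / (((k+1).factorial : ℝ) * P) := by ring
        _ ≤ (((k:ℝ)+1) * S * T ^ k) / (((k+1).factorial : ℝ) * P) := by
            apply div_le_div_of_nonneg_right h2
            positivity
        _ = ((k:ℝ)+1) * S / ((k+1).factorial * P) * T ^ k := by ring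
    · -- upper: cnt ≤ T^(k+1)/((k+1)! P)
      have h1 : (kcnt Q x : ℝ) ≤ T ^ (k+1) / ((k+1).factorial : ℝ) / P := by
        rw [le_div_iff₀ hPpos]
        calc (kcnt Q x : ℝ) * P = P * kcnt Q x := by ring
          _ ≤ T ^ (k+1) / ((k+1).factorial : ℝ) := hup
      have heq : 1 / ((k+1).factorial : ℝ) * (1 / P) * T ^ (k+1)
          = T ^ (k+1) / ((k+1).factorial : ℝ) / P := by field_simp
      have hrhs : 0 ≤ ((k:ℝ)+1) * S / ((k+1).factorial * P) * T ^ k := by positivity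
      linarith
  calc ‖(kcnt Q x : ℝ) - 1 / ((k+1).factorial : ℝ) * (1 / P) * T ^ (k+1)‖
      = |(kcnt Q x : ℝ) - 1 / ((k+1).factorial : ℝ) * (1 / P) * T ^ (k+1)| := rfl
    _ ≤ ((k:ℝ)+1) * S / ((k+1).factorial * P) * T ^ k := habs
    _ = ((k:ℝ)+1) * S / ((k+1).factorial * P) * ‖T ^ (k+1-1)‖ := by
        rw [Nat.add_sub_cancel, Real.norm_eq_abs, abs_of_nonneg (pow_nonneg hT0 k)]
end

section
/- Let r ≥ 1 be a fixed integer and t_1, ..., t_r > 0 be fixed real numbers. Then uniformly for real z ≥ 1 and integers a_1, ..., a_r ≥ 1, the number of r-tuples (k_1, ..., k_r) of integers k_i ≥ 1 with k_1 t_1 + ⋯ + k_r t_r ≤ z and gcd(k_i, a_i) = 1 for every 1 ≤ i ≤ r equals (1/r!) (∏_{i=1}^r φ(a_i)/(a_i t_i)) z^r + O(z^{r-1} ∑_{i=1}^r θ(a_i)), where the implied constant depends only on r and t_1, ..., t_r. -/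
/-- `theta a` is the number of squarefree divisors of `a`. -/
def theta (a : ℕ) : ℕ := (a.divisors.filter Squarefree).card

open Finset ArithmeticFunction
open scoped Classical


lemma pow_sub_pow_le_mul (a b : ℝ) (hb : 0 ≤ b) (hab : b ≤ a) (n : ℕ) :
    (n+1) * b^n * (a-b) ≤ a^(n+1) - b^(n+1) ∧ a^(n+1) - b^(n+1) ≤ (n+1) * a^n * (a-b) := by
  have ha : 0 ≤ a := hb.trans hab
  have key : (∑ i ∈ range (n+1), a^i * b^(n-i)) * (a-b) = a^(n+1) - b^(n+1) := by
    simpa using geom_sum₂_mul a b (n+1)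
  have hL : ∀ i ∈ range (n+1), b^n ≤ a^i * b^(n-i) := by
    intro i hi
    simp only [Finset.mem_range] at hi
    calc b^n = b^i * b^(n-i) := by rw [← pow_add]; congr 1; omega
      _ ≤ a^i * b^(n-i) :=
          mul_le_mul_of_nonneg_right (pow_le_pow_left₀ hb hab i) (pow_nonneg hb _)
  have hU : ∀ i ∈ range (n+1), a^i * b^(n-i) ≤ a^n := by
    intro i hi
    simp only [Finset.mem_range] at hi
    calc a^i * b^(n-i) ≤ a^i * a^(n-i) :=
          mul_le_mul_of_nonneg_left (pow_le_pow_left₀ hb hab _) (pow_nonneg ha _)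
      _ = a^n := by rw [← pow_add]; congr 1; omega
  have hab' : (0:ℝ) ≤ a - b := by linarith
  constructor
  · rw [← key]
    have := Finset.sum_le_sum hL
    calc (n+1) * b^n * (a-b) = (∑ _i ∈ range (n+1), b^n) * (a-b) := by
          simp [mul_comm]
      _ ≤ (∑ i ∈ range (n+1), a^i * b^(n-i)) * (a-b) :=
          mul_le_mul_of_nonneg_right this hab'
  · rw [← key]
    have := Finset.sum_le_sum hU
    calc (∑ i ∈ range (n+1), a^i * b^(n-i)) * (a-b)
        ≤ (∑ _i ∈ range (n+1), a^n) * (a-b) := mul_le_mul_of_nonneg_right this hab'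
      _ = (n+1) * a^n * (a-b) := by simp [mul_comm]

lemma lemA (s z : ℝ) (hs : 0 < s) (hz : 0 ≤ z) (n : ℕ) :
    |(∑ m ∈ Finset.Icc 1 ⌊z/s⌋₊, (z - m*s)^n) - z^(n+1)/((n+1)*s)| ≤ 2 * z^n := by
  set M := ⌊z/s⌋₊ with hM
  have hds : (0:ℝ) ≤ z / s := div_nonneg hz hs.le
  have hMle : (M:ℝ) ≤ z / s := Nat.floor_le hds
  have hMle' : (M:ℝ) * s ≤ z := by
    rw [← le_div_iff₀ hs]; exact hMle
  have hzlt : z < ((M:ℝ)+1) * s := by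
    rw [← div_lt_iff₀ hs]
    exact_mod_cast Nat.lt_floor_add_one (z/s)
  have hn1 : (0:ℝ) < (n:ℝ) + 1 := by positivity
  have htel : ∑ i ∈ range M, ((z - (i:ℝ)*s)^(n+1) - (z - ((i:ℝ)+1)*s)^(n+1))
      = z^(n+1) - (z - (M:ℝ)*s)^(n+1) := by
    have := Finset.sum_range_sub' (fun i : ℕ => (z - (i:ℝ)*s)^(n+1)) M
    simpa [add_mul] using this
  have hIcc : ∀ f : ℕ → ℝ, ∑ m ∈ Finset.Icc 1 M, f m = ∑ i ∈ range M, f (i+1) := by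
    intro f
    rw [← Finset.Ico_add_one_right_eq_Icc, Finset.sum_Ico_eq_sum_range]
    simp [add_comm]
  have hMz : (0:ℝ) ≤ (z - (M:ℝ)*s)^(n+1) := by
    apply pow_nonneg; linarith
  have hub : (∑ m ∈ Finset.Icc 1 M, (z - (m:ℝ)*s)^n) ≤ z^(n+1)/((n+1)*s) := by
    have step : ∀ i ∈ range M, ((n:ℝ)+1) * s * (z - ((i:ℝ)+1)*s)^n
        ≤ (z - (i:ℝ)*s)^(n+1) - (z - ((i:ℝ)+1)*s)^(n+1) := by
      intro i hi
      simp only [Finset.mem_range] at hi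
      have hb : (0:ℝ) ≤ z - ((i:ℝ)+1)*s := by
        have h1 : (i:ℝ)+1 ≤ (M:ℝ) := by exact_mod_cast hi
        nlinarith
      have hab : z - ((i:ℝ)+1)*s ≤ z - (i:ℝ)*s := by nlinarith
      have := (pow_sub_pow_le_mul _ _ hb hab n).1
      calc ((n:ℝ)+1) * s * (z - ((i:ℝ)+1)*s)^n
          = ((n:ℝ)+1) * (z - ((i:ℝ)+1)*s)^n * ((z - (i:ℝ)*s) - (z - ((i:ℝ)+1)*s)) := by ring
        _ ≤ _ := this
    have hsum : ((n:ℝ)+1) * s * ∑ m ∈ Finset.Icc 1 M, (z - (m:ℝ)*s)^n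
        ≤ z^(n+1) - (z - (M:ℝ)*s)^(n+1) := by
      rw [hIcc (fun m => (z - (m:ℝ)*s)^n)]
      rw [← htel, Finset.mul_sum]
      apply Finset.sum_le_sum
      intro i hi
      have := step i hi
      push_cast at this ⊢
      linarith
    rw [le_div_iff₀ (by positivity)]
    nlinarith
  have hlb : z^(n+1)/((n+1)*s) - 2 * z^n ≤ ∑ m ∈ Finset.Icc 1 M, (z - (m:ℝ)*s)^n := by
    have step : ∀ i ∈ range M, (z - (i:ℝ)*s)^(n+1) - (z - ((i:ℝ)+1)*s)^(n+1)
        ≤ ((n:ℝ)+1) * s * (z - (i:ℝ)*s)^n := by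
      intro i hi
      simp only [Finset.mem_range] at hi
      have hb : (0:ℝ) ≤ z - ((i:ℝ)+1)*s := by
        have h1 : (i:ℝ)+1 ≤ (M:ℝ) := by exact_mod_cast hi
        nlinarith
      have hab : z - ((i:ℝ)+1)*s ≤ z - (i:ℝ)*s := by nlinarith
      have := (pow_sub_pow_le_mul _ _ hb hab n).2
      calc (z - (i:ℝ)*s)^(n+1) - (z - ((i:ℝ)+1)*s)^(n+1) ≤
          ((n:ℝ)+1) * (z - (i:ℝ)*s)^n * ((z - (i:ℝ)*s) - (z - ((i:ℝ)+1)*s)) := this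
        _ = ((n:ℝ)+1) * s * (z - (i:ℝ)*s)^n := by ring
    have hsum : z^(n+1) - (z - (M:ℝ)*s)^(n+1)
        ≤ ((n:ℝ)+1) * s * ∑ i ∈ range M, (z - (i:ℝ)*s)^n := by
      rw [← htel, Finset.mul_sum]
      exact Finset.sum_le_sum step
    have hshift : ∑ i ∈ range M, (z - (i:ℝ)*s)^n
        = z^n + (∑ m ∈ Finset.Icc 1 M, (z - (m:ℝ)*s)^n) - (z - (M:ℝ)*s)^n := by
      have h1 := Finset.sum_range_succ (fun i : ℕ => (z - (i:ℝ)*s)^n) M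
      have h2 := Finset.sum_range_succ' (fun i : ℕ => (z - (i:ℝ)*s)^n) M
      rw [hIcc (fun m => (z - (m:ℝ)*s)^n)]
      rw [h1] at h2
      push_cast at h2 ⊢
      norm_num at h2
      linarith
    have hzMs : 0 ≤ z - (M:ℝ)*s := by linarith
    have hzMs2 : z - (M:ℝ)*s < s := by nlinarith
    have hzn : 0 ≤ z^n := pow_nonneg hz n
    have hpowMs : (z - (M:ℝ)*s)^(n+1) ≤ s * z^n := by
      have h1 : (z - (M:ℝ)*s)^n ≤ z^n := by
        apply pow_le_pow_left₀ hzMs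
        nlinarith [mul_nonneg (Nat.cast_nonneg M : (0:ℝ) ≤ (M:ℝ)) hs.le]
      calc (z - (M:ℝ)*s)^(n+1) = (z - (M:ℝ)*s) * (z - (M:ℝ)*s)^n := by ring
        _ ≤ s * z^n := mul_le_mul hzMs2.le h1 (pow_nonneg hzMs n) hs.le
    have hpowMsn : 0 ≤ (z - (M:ℝ)*s)^n := pow_nonneg hzMs n
    rw [hshift, mul_sub, mul_add] at hsum
    rw [sub_le_iff_le_add, div_le_iff₀ (by positivity : (0:ℝ) < ((n:ℝ)+1)*s)]
    nlinarith [mul_nonneg (mul_nonneg (Nat.cast_nonneg n : (0:ℝ) ≤ (n:ℝ)) hs.le) hzn,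
      mul_nonneg (mul_nonneg hn1.le hs.le) hpowMsn]
  rw [abs_sub_le_iff]
  constructor
  · have : 0 ≤ z^n := pow_nonneg hz n
    linarith
  · linarith

lemma moebius_divisors_sum (g : ℕ) : (∑ d ∈ g.divisors, (moebius d : ℝ)) = if g = 1 then 1 else 0 := by
  have h := congrArg (fun f : ArithmeticFunction ℤ => f g) moebius_mul_coe_zeta
  simp only [coe_mul_zeta_apply, one_apply] at h
  have : ((∑ d ∈ g.divisors, (moebius d : ℤ) : ℤ) : ℝ) = ((if g = 1 then (1:ℤ) else 0 : ℤ) : ℝ) := by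
    exact_mod_cast congrArg (fun x : ℤ => (x:ℝ)) h
  push_cast at this
  simpa using this

lemma moebius_sum_coprime (k a : ℕ) (hk : 0 < k) (ha : 0 < a) :
    (∑ d ∈ a.divisors, if d ∣ k then (moebius d : ℝ) else 0)
      = if Nat.Coprime k a then 1 else 0 := by
  rw [← Finset.sum_filter]
  have hset : a.divisors.filter (· ∣ k) = (Nat.gcd k a).divisors := by
    ext d
    simp only [Finset.mem_filter, Nat.mem_divisors]
    constructor
    · rintro ⟨⟨hda, _⟩, hdk⟩
      exact ⟨Nat.dvd_gcd hdk hda, Nat.gcd_ne_zero_right ha.ne'⟩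
    · rintro ⟨hd, _⟩
      exact ⟨⟨(Nat.dvd_gcd_iff.mp hd).2, ha.ne'⟩, (Nat.dvd_gcd_iff.mp hd).1⟩
  rw [hset, moebius_divisors_sum]

lemma moebius_over_divisors_eq_totient (a : ℕ) (ha : 0 < a) :
    ∑ d ∈ a.divisors, (moebius d : ℝ) / d = (Nat.totient a : ℝ) / a := by
  have key : ∀ n > 0, (∑ x ∈ n.divisorsAntidiagonal, (moebius x.1 : ℝ) * (x.2 : ℝ))
      = (Nat.totient n : ℝ) := by
    rw [← sum_eq_iff_sum_mul_moebius_eq (f := fun n => (Nat.totient n : ℝ)) (g := fun n => (n : ℝ))]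
    intro n hn
    exact_mod_cast congrArg (fun m : ℕ => (m:ℝ)) (Nat.sum_totient n)
  have h := key a ha
  rw [Nat.sum_divisorsAntidiagonal (fun d e => (moebius d : ℝ) * (e : ℝ))] at h
  rw [eq_div_iff (by exact_mod_cast ha.ne' : (a:ℝ) ≠ 0)]
  rw [← h, Finset.sum_mul]
  apply Finset.sum_congr rfl
  intro d hd
  rw [Nat.mem_divisors] at hd
  have hd0 : (d:ℝ) ≠ 0 := by
    have := Nat.pos_of_mem_divisors (Nat.mem_divisors.mpr hd)
    exact_mod_cast this.ne'
  rw [Nat.cast_div hd.1 hd0]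
  field_simp

lemma abs_moebius_sum (a : ℕ) :
    ∑ d ∈ a.divisors, |(moebius d : ℝ)| = (theta a : ℝ) := by
  rw [theta, Finset.card_filter]
  push_cast
  apply Finset.sum_congr rfl
  intro d _
  by_cases h : Squarefree d
  · rw [moebius_apply_of_squarefree h]
    simp [abs_of_nonneg, h]
  · rw [moebius_eq_zero_of_not_squarefree h]
    simp [h]

lemma sum_multiples (t z : ℝ) (ht : 0 < t) (hz : 0 ≤ z) (d : ℕ) (hd : 0 < d) (f : ℕ → ℝ) :
    ∑ k ∈ (Finset.Icc 1 ⌊z/t⌋₊).filter (d ∣ ·), f k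
      = ∑ m ∈ Finset.Icc 1 ⌊z/((d:ℝ)*t)⌋₊, f (d*m) := by
  have hdt : (0:ℝ) < (d:ℝ) * t := by positivity
  apply Finset.sum_nbij' (i := fun k => k / d) (j := fun m => d * m)
  · intro k hk
    simp only [Finset.mem_filter, Finset.mem_Icc] at hk
    obtain ⟨⟨hk1, hk2⟩, hdk⟩ := hk
    simp only [Finset.mem_Icc]
    constructor
    · exact Nat.one_le_div_iff hd |>.mpr (Nat.le_of_dvd (by omega) hdk)
    · apply Nat.le_floor
      obtain ⟨m, rfl⟩ := hdk
      rw [Nat.mul_div_cancel_left _ hd]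
      have hkr : ((d*m : ℕ):ℝ) ≤ z / t := by
        calc ((d*m:ℕ):ℝ) ≤ (⌊z/t⌋₊ : ℝ) := by exact_mod_cast hk2
          _ ≤ z / t := Nat.floor_le (by positivity)
      rw [le_div_iff₀ hdt]
      push_cast at hkr ⊢
      rw [le_div_iff₀ ht] at hkr
      nlinarith
  · intro m hm
    simp only [Finset.mem_Icc] at hm
    simp only [Finset.mem_filter, Finset.mem_Icc]
    refine ⟨⟨Nat.mul_pos hd (by omega : 0 < m), ?_⟩, Dvd.intro m rfl⟩
    apply Nat.le_floor
    have hmr : (m:ℝ) ≤ z / ((d:ℝ)*t) := by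
      calc (m:ℝ) ≤ (⌊z/((d:ℝ)*t)⌋₊ : ℝ) := by exact_mod_cast hm.2
        _ ≤ _ := Nat.floor_le (by positivity)
    rw [le_div_iff₀ hdt] at hmr
    rw [le_div_iff₀ ht]
    push_cast
    nlinarith
  · intro k hk
    simp only [Finset.mem_filter] at hk
    exact Nat.mul_div_cancel' hk.2
  · intro m _
    exact Nat.mul_div_cancel_left _ hd
  · intro k hk
    simp only [Finset.mem_filter] at hk
    rw [Nat.mul_div_cancel' hk.2]

lemma lemB (t z : ℝ) (ht : 0 < t) (hz : 0 ≤ z) (n a : ℕ) (ha : 0 < a) :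
    |(∑ k ∈ (Finset.Icc 1 ⌊z/t⌋₊).filter (fun k => Nat.Coprime k a), (z - k*t)^n)
      - ((Nat.totient a : ℝ) / a) * (z^(n+1)/((n+1)*t))| ≤ 2 * (theta a) * z^n := by
  have hstep1 : (∑ k ∈ (Finset.Icc 1 ⌊z/t⌋₊).filter (fun k => Nat.Coprime k a), (z - k*t)^n)
      = ∑ d ∈ a.divisors, (moebius d : ℝ) *
          ∑ m ∈ Finset.Icc 1 ⌊z/((d:ℝ)*t)⌋₊, (z - m*((d:ℝ)*t))^n := by
    rw [Finset.sum_filter]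
    have h1 : ∀ k ∈ Finset.Icc 1 ⌊z/t⌋₊,
        (if Nat.Coprime k a then (z - (k:ℝ)*t)^n else 0)
          = ∑ d ∈ a.divisors, (if d ∣ k then (moebius d : ℝ) else 0) * (z - (k:ℝ)*t)^n := by
      intro k hk
      simp only [Finset.mem_Icc] at hk
      rw [← Finset.sum_mul, moebius_sum_coprime k a (by omega) ha]
      by_cases h : Nat.Coprime k a <;> simp [h]
    rw [Finset.sum_congr rfl h1, Finset.sum_comm]
    apply Finset.sum_congr rfl
    intro d hd
    have hd0 : 0 < d := Nat.pos_of_mem_divisors hd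
    calc ∑ x ∈ Finset.Icc 1 ⌊z/t⌋₊, (if d ∣ x then (moebius d : ℝ) else 0) * (z - (x:ℝ)*t)^n
        = ∑ x ∈ Finset.Icc 1 ⌊z/t⌋₊, (if d ∣ x then (moebius d : ℝ) * (z - (x:ℝ)*t)^n else 0) := by
          simp [ite_mul]
      _ = ∑ x ∈ (Finset.Icc 1 ⌊z/t⌋₊).filter (d ∣ ·), (moebius d : ℝ) * (z - (x:ℝ)*t)^n :=
          (Finset.sum_filter _ _).symm
      _ = (moebius d : ℝ) * ∑ x ∈ (Finset.Icc 1 ⌊z/t⌋₊).filter (d ∣ ·), (z - (x:ℝ)*t)^n := by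
          rw [Finset.mul_sum]
      _ = (moebius d : ℝ) * ∑ m ∈ Finset.Icc 1 ⌊z/((d:ℝ)*t)⌋₊, (z - ((d*m : ℕ):ℝ)*t)^n := by
          rw [sum_multiples t z ht hz d hd0 (fun k => (z - (k:ℝ)*t)^n)]
      _ = (moebius d : ℝ) * ∑ m ∈ Finset.Icc 1 ⌊z/((d:ℝ)*t)⌋₊, (z - (m:ℝ)*((d:ℝ)*t))^n := by
          congr 1
          apply Finset.sum_congr rfl
          intro m _
          push_cast
          ring_nf
  rw [hstep1]
  have hmain : ∑ d ∈ a.divisors, (moebius d : ℝ) * (z^(n+1)/((n+1)*((d:ℝ)*t)))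
      = ((Nat.totient a : ℝ) / a) * (z^(n+1)/((n+1)*t)) := by
    rw [← moebius_over_divisors_eq_totient a ha, Finset.sum_mul]
    apply Finset.sum_congr rfl
    intro d hd
    have hd0 : 0 < d := Nat.pos_of_mem_divisors hd
    have hdr : (0:ℝ) < (d:ℝ) := by exact_mod_cast hd0
    calc (moebius d : ℝ) * (z^(n+1)/(((n:ℝ)+1)*((d:ℝ)*t)))
        = ((moebius d : ℝ)*z^(n+1))/((d:ℝ)*(((n:ℝ)+1)*t)) := by
          rw [mul_comm ((n:ℝ)+1) ((d:ℝ)*t)]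
          ring
      _ = (moebius d : ℝ)/(d:ℝ) * (z^(n+1)/(((n:ℝ)+1)*t)) := by
          rw [div_mul_div_comm]
  rw [← hmain, ← Finset.sum_sub_distrib]
  have hbd : ∀ d ∈ a.divisors,
      |(moebius d : ℝ) * (∑ m ∈ Finset.Icc 1 ⌊z/((d:ℝ)*t)⌋₊, (z - m*((d:ℝ)*t))^n)
        - (moebius d : ℝ) * (z^(n+1)/((n+1)*((d:ℝ)*t)))| ≤ |(moebius d : ℝ)| * (2 * z^n) := by
    intro d hd
    have hd0 : 0 < d := Nat.pos_of_mem_divisors hd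
    rw [← mul_sub, abs_mul]
    apply mul_le_mul_of_nonneg_left _ (abs_nonneg _)
    exact lemA ((d:ℝ)*t) z (by positivity) hz n
  calc |∑ d ∈ a.divisors, ((moebius d : ℝ) * (∑ m ∈ Finset.Icc 1 ⌊z/((d:ℝ)*t)⌋₊, (z - m*((d:ℝ)*t))^n)
        - (moebius d : ℝ) * (z^(n+1)/((n+1)*((d:ℝ)*t))))|
      ≤ ∑ d ∈ a.divisors, |(moebius d : ℝ) * (∑ m ∈ Finset.Icc 1 ⌊z/((d:ℝ)*t)⌋₊, (z - m*((d:ℝ)*t))^n)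
        - (moebius d : ℝ) * (z^(n+1)/((n+1)*((d:ℝ)*t)))| := Finset.abs_sum_le_sum_abs _ _
    _ ≤ ∑ d ∈ a.divisors, |(moebius d : ℝ)| * (2 * z^n) := Finset.sum_le_sum hbd
    _ = 2 * (theta a) * z^n := by
        rw [← Finset.sum_mul, abs_moebius_sum]
        ring

noncomputable def F (r : ℕ) (t : Fin r → ℝ) (z : ℝ) (a : Fin r → ℕ) : Finset (Fin r → ℕ) :=
  (Finset.Icc (fun _ => 1) (fun i => ⌊z / t i⌋₊)).filter
    (fun k => (∑ i, (k i : ℝ) * t i) ≤ z ∧ ∀ i, Nat.Coprime (k i) (a i))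

lemma mem_F_iff {r : ℕ} {t : Fin r → ℝ} (ht : ∀ i, 0 < t i) {z : ℝ} {a : Fin r → ℕ}
    {k : Fin r → ℕ} :
    k ∈ F r t z a ↔
      (∀ i, 1 ≤ k i) ∧ (∑ i, (k i : ℝ) * t i) ≤ z ∧ ∀ i, Nat.Coprime (k i) (a i) := by
  simp only [F, Finset.mem_filter, Finset.mem_Icc, Pi.le_def]
  constructor
  · rintro ⟨⟨h1, _⟩, h3, h4⟩
    exact ⟨h1, h3, h4⟩
  · rintro ⟨h1, h3, h4⟩
    refine ⟨⟨h1, ?_⟩, h3, h4⟩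
    intro i
    apply Nat.le_floor
    rw [le_div_iff₀ (ht i)]
    calc (k i : ℝ) * t i ≤ ∑ j, (k j : ℝ) * t j := by
          apply Finset.single_le_sum (f := fun j => (k j : ℝ) * t j) _ (Finset.mem_univ i)
          intro j _
          have := (ht j).le
          positivity
      _ ≤ z := h3

lemma F_card_succ (r : ℕ) (t : Fin (r+1) → ℝ) (ht : ∀ i, 0 < t i) (z : ℝ) (hz : 0 ≤ z)
    (a : Fin (r+1) → ℕ) :
    (F (r+1) t z a).card =
      ∑ c ∈ (Finset.Icc 1 ⌊z / t (Fin.last r)⌋₊).filter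
          (fun c => Nat.Coprime c (a (Fin.last r))),
        (F r (fun i => t i.castSucc) (z - c * t (Fin.last r)) (fun i => a i.castSucc)).card := by
  have ht' : ∀ i : Fin r, 0 < t i.castSucc := fun i => ht _
  rw [Finset.card_eq_sum_card_fiberwise (f := fun k => k (Fin.last r))
    (t := (Finset.Icc 1 ⌊z / t (Fin.last r)⌋₊).filter
      (fun c => Nat.Coprime c (a (Fin.last r))))]
  · apply Finset.sum_congr rfl
    intro c hc
    simp only [Finset.mem_filter, Finset.mem_Icc] at hc
    obtain ⟨⟨hc1, hc2⟩, hccop⟩ := hc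
    have hcz : (c : ℝ) * t (Fin.last r) ≤ z := by
      rw [← le_div_iff₀ (ht _)]
      calc (c:ℝ) ≤ (⌊z / t (Fin.last r)⌋₊ : ℝ) := by exact_mod_cast hc2
        _ ≤ z / t (Fin.last r) := Nat.floor_le (div_nonneg hz (ht _).le)
    apply Finset.card_nbij' (i := fun k => Fin.init k) (j := fun m => Fin.snoc m c)
    · intro k hk
      simp only [Finset.mem_coe, Finset.mem_filter] at hk
      obtain ⟨hkF, hklast⟩ := hk
      rw [mem_F_iff ht] at hkF
      obtain ⟨h1, h2, h3⟩ := hkF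
      rw [Finset.mem_coe, mem_F_iff ht']
      refine ⟨fun i => h1 _, ?_, fun i => h3 _⟩
      have hsum : ∑ i, (k i : ℝ) * t i
          = (∑ i : Fin r, (Fin.init k i : ℝ) * t i.castSucc) + (c : ℝ) * t (Fin.last r) := by
        rw [Fin.sum_univ_castSucc]
        simp [Fin.init, hklast]
      linarith [h2, hsum.symm.le, hsum.le]
    · intro m hm
      rw [Finset.mem_coe, mem_F_iff ht'] at hm
      obtain ⟨h1, h2, h3⟩ := hm
      simp only [Finset.mem_coe, Finset.mem_filter]
      constructor
      · rw [mem_F_iff ht]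
        refine ⟨?_, ?_, ?_⟩
        · intro i
          induction i using Fin.lastCases with
          | last => simpa using hc1
          | cast j => simpa using h1 j
        · rw [Fin.sum_univ_castSucc]
          simp only [Fin.snoc_castSucc, Fin.snoc_last]
          linarith
        · intro i
          induction i using Fin.lastCases with
          | last => simpa using hccop
          | cast j => simpa using h3 j
      · simp
    · intro k hk
      simp only [Finset.mem_coe, Finset.mem_filter] at hk
      rw [← hk.2]
      exact Fin.snoc_init_self k
    · intro m _
      simp
  · intro k hk
    rw [Finset.mem_coe, mem_F_iff ht] at hk
    obtain ⟨h1, h2, h3⟩ := hk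
    simp only [Finset.mem_coe, Finset.mem_filter, Finset.mem_Icc]
    refine ⟨⟨h1 _, ?_⟩, h3 _⟩
    apply Nat.le_floor
    rw [le_div_iff₀ (ht _)]
    calc (k (Fin.last r) : ℝ) * t (Fin.last r) ≤ ∑ j, (k j : ℝ) * t j := by
          apply Finset.single_le_sum (f := fun j => (k j : ℝ) * t j) _ (Finset.mem_univ _)
          intro j _
          have := (ht j).le
          positivity
      _ ≤ z := h2

lemma F_card_one (t : Fin 1 → ℝ) (ht : ∀ i, 0 < t i) (z : ℝ) (a : Fin 1 → ℕ) :
    (F 1 t z a).card =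
      ((Finset.Icc 1 ⌊z / t 0⌋₊).filter (fun c => Nat.Coprime c (a 0))).card := by
  apply Finset.card_nbij' (i := fun k => k 0) (j := fun m => fun _ => m)
  · intro k hk
    rw [Finset.mem_coe, mem_F_iff ht] at hk
    obtain ⟨h1, h2, h3⟩ := hk
    simp only [Finset.mem_coe, Finset.mem_filter, Finset.mem_Icc]
    refine ⟨⟨h1 0, ?_⟩, h3 0⟩
    apply Nat.le_floor
    rw [le_div_iff₀ (ht 0)]
    calc (k 0 : ℝ) * t 0 ≤ ∑ j, (k j : ℝ) * t j := by
          rw [Fin.sum_univ_one]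
      _ ≤ z := h2
  · intro m hm
    simp only [Finset.mem_coe, Finset.mem_filter, Finset.mem_Icc] at hm
    obtain ⟨⟨hm1, hm2⟩, hm3⟩ := hm
    have hz0 : (0:ℝ) ≤ z / t 0 := by
      by_contra hneg
      push_neg at hneg
      have h0 : ⌊z / t 0⌋₊ = 0 := Nat.floor_of_nonpos hneg.le
      omega
    rw [Finset.mem_coe, mem_F_iff ht]
    refine ⟨fun i => hm1, ?_, fun i => by simpa [Fin.eq_zero i] using hm3⟩
    rw [Fin.sum_univ_one]
    rw [← le_div_iff₀ (ht 0)]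
    calc ((m:ℕ):ℝ) ≤ (⌊z / t 0⌋₊ : ℝ) := by exact_mod_cast hm2
      _ ≤ z / t 0 := Nat.floor_le hz0
  · intro k hk
    funext i
    rw [Fin.eq_zero i]
  · intro m _
    rfl

lemma key_induction : ∀ (r : ℕ), 1 ≤ r → ∀ (t : Fin r → ℝ), (∀ i, 0 < t i) →
    ∃ C > 0, ∀ z : ℝ, 0 ≤ z → ∀ a : Fin r → ℕ, (∀ i, 1 ≤ a i) →
      |((F r t z a).card : ℝ) -
          (1 / (r.factorial : ℝ)) * (∏ i, (Nat.totient (a i) : ℝ) / ((a i : ℝ) * t i)) * z ^ r|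
        ≤ C * z ^ (r - 1) * ∑ i, (theta (a i) : ℝ) := by
  intro r hr
  induction r, hr using Nat.le_induction with
  | base =>
    intro t ht
    refine ⟨2, by norm_num, ?_⟩
    intro z hz a ha
    have h := lemB (t 0) z (ht 0) hz 0 (a 0) (ha 0)
    rw [F_card_one t ht z a]
    have hsum : (∑ k ∈ (Finset.Icc 1 ⌊z / t 0⌋₊).filter (fun k => Nat.Coprime k (a 0)),
        (z - (k:ℝ) * t 0)^0) = (((Finset.Icc 1 ⌊z / t 0⌋₊).filter
          (fun k => Nat.Coprime k (a 0))).card : ℝ) := by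
      simp
    rw [hsum] at h
    have ha0 : ((a 0 : ℕ) : ℝ) ≠ 0 := by
      have := ha 0
      exact Nat.cast_ne_zero.mpr (by omega)
    have ht0 : t 0 ≠ 0 := (ht 0).ne'
    calc |(((Finset.Icc 1 ⌊z / t 0⌋₊).filter (fun k => Nat.Coprime k (a 0))).card : ℝ) -
          1 / ((Nat.factorial 1 : ℕ) : ℝ) * (∏ i, (Nat.totient (a i) : ℝ) / ((a i : ℝ) * t i)) * z ^ 1|
        = |(((Finset.Icc 1 ⌊z / t 0⌋₊).filter (fun k => Nat.Coprime k (a 0))).card : ℝ) -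
          ((Nat.totient (a 0) : ℝ) / (a 0)) * (z^(0+1)/((((0:ℕ):ℝ)+1) * t 0))| := by
          congr 1
          rw [Fin.prod_univ_one]
          norm_num [Nat.factorial]
          field_simp
      _ ≤ 2 * (theta (a 0)) * z^0 := h
      _ = 2 * z ^ (1 - 1) * ∑ i, (theta (a i) : ℝ) := by
          rw [Fin.sum_univ_one]
          norm_num
  | succ r hr IH =>
    intro t ht
    set t' : Fin r → ℝ := fun i => t i.castSucc with ht'def
    have ht' : ∀ i, 0 < t' i := fun i => ht _
    obtain ⟨C, hC, hIH⟩ := IH t' ht'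
    set tL := t (Fin.last r) with htLdef
    have htL : 0 < tL := ht _
    set B : ℝ := (1 / (r.factorial : ℝ)) * ∏ i, 1 / t' i with hBdef
    have hB : 0 < B := by
      rw [hBdef]
      apply mul_pos
      · have : (0:ℝ) < (r.factorial : ℝ) := by exact_mod_cast r.factorial_pos
        positivity
      · exact Finset.prod_pos (fun i _ => by have := ht' i; positivity)
    refine ⟨C / tL + 2 * B, by have := div_pos hC htL; linarith, ?_⟩
    intro z hz a ha
    set a' : Fin r → ℕ := fun i => a i.castSucc with ha'def
    have ha' : ∀ i, 1 ≤ a' i := fun i => ha _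
    set aL := a (Fin.last r) with haLdef
    set K := (Finset.Icc 1 ⌊z / tL⌋₊).filter (fun c => Nat.Coprime c aL) with hKdef
    set A : ℝ := (1 / (r.factorial : ℝ)) * ∏ i, (Nat.totient (a' i) : ℝ) / ((a' i : ℝ) * t' i)
      with hAdef
    have hprodA : (0:ℝ) ≤ ∏ i, (Nat.totient (a' i) : ℝ) / ((a' i : ℝ) * t' i) :=
      Finset.prod_nonneg (fun i _ =>
        div_nonneg (Nat.cast_nonneg _) (mul_nonneg (Nat.cast_nonneg _) (ht' i).le))
    have hA0 : 0 ≤ A := by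
      rw [hAdef]
      exact mul_nonneg (by positivity) hprodA
    have hAB : A ≤ B := by
      rw [hAdef, hBdef]
      apply mul_le_mul_of_nonneg_left _ (by positivity)
      apply Finset.prod_le_prod (fun i _ =>
        div_nonneg (Nat.cast_nonneg _) (mul_nonneg (Nat.cast_nonneg _) (ht' i).le))
      intro i _
      have hai : (0:ℝ) < (a' i : ℝ) := by
        have := ha' i
        exact_mod_cast (by omega : 0 < a' i)
      rw [div_le_div_iff₀ (mul_pos hai (ht' i)) (ht' i)]
      have h1 : (Nat.totient (a' i) : ℝ) ≤ (a' i : ℝ) := by exact_mod_cast Nat.totient_le _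
      have := (ht' i).le
      nlinarith
    set Sg : ℝ := ∑ i, (theta (a' i) : ℝ) with hSgdef
    have hSg0 : 0 ≤ Sg := Finset.sum_nonneg (fun i _ => by positivity)
    have hθL0 : (0:ℝ) ≤ (theta aL : ℝ) := by positivity
    have hKc : ∀ c ∈ K, 1 ≤ c ∧ (c : ℝ) * tL ≤ z := by
      intro c hc
      simp only [hKdef, Finset.mem_filter, Finset.mem_Icc] at hc
      refine ⟨hc.1.1, ?_⟩
      rw [← le_div_iff₀ htL]
      calc (c:ℝ) ≤ (⌊z / tL⌋₊ : ℝ) := by exact_mod_cast hc.1.2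
        _ ≤ z / tL := Nat.floor_le (div_nonneg hz htL.le)
    have h1 : ∀ c ∈ K,
        |((F r t' (z - c * tL) a').card : ℝ) - A * (z - c * tL) ^ r|
          ≤ C * z ^ (r - 1) * Sg := by
      intro c hc
      have hzc : 0 ≤ z - (c:ℝ) * tL := by linarith [(hKc c hc).2]
      have := hIH (z - c * tL) hzc a' ha'
      calc |((F r t' (z - c * tL) a').card : ℝ) - A * (z - c * tL) ^ r|
          ≤ C * (z - c * tL) ^ (r - 1) * Sg := this
        _ ≤ C * z ^ (r - 1) * Sg := by
            apply mul_le_mul_of_nonneg_right _ hSg0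
            apply mul_le_mul_of_nonneg_left _ hC.le
            apply pow_le_pow_left₀ hzc
            nlinarith [(hKc c hc).2, mul_nonneg (Nat.cast_nonneg c : (0:ℝ) ≤ c) htL.le]
    set S : ℝ := ∑ c ∈ K, (z - (c:ℝ) * tL) ^ r with hSdef
    have h2 : |((F (r+1) t z a).card : ℝ) - A * S| ≤ (K.card : ℝ) * (C * z ^ (r-1) * Sg) := by
      rw [F_card_succ r t ht z hz a]
      push_cast
      rw [hSdef, Finset.mul_sum, ← Finset.sum_sub_distrib]
      calc |∑ c ∈ K, (((F r t' (z - c * tL) a').card : ℝ) - A * (z - c * tL) ^ r)|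
          ≤ ∑ c ∈ K, |((F r t' (z - c * tL) a').card : ℝ) - A * (z - c * tL) ^ r| :=
            Finset.abs_sum_le_sum_abs _ _
        _ ≤ (K.card : ℝ) * (C * z ^ (r-1) * Sg) := by
            have := Finset.sum_le_card_nsmul K _ _ h1
            simpa [nsmul_eq_mul] using this
    have hKcard : (K.card : ℝ) ≤ z / tL := by
      have h3 : K.card ≤ ⌊z / tL⌋₊ := by
        calc K.card ≤ (Finset.Icc 1 ⌊z / tL⌋₊).card := Finset.card_filter_le _ _
          _ = ⌊z / tL⌋₊ := by rw [Nat.card_Icc]; omega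
      calc (K.card : ℝ) ≤ (⌊z / tL⌋₊ : ℝ) := by exact_mod_cast h3
        _ ≤ z / tL := Nat.floor_le (div_nonneg hz htL.le)
    have haL1 : 1 ≤ aL := ha _
    have h4 := lemB tL z htL hz r aL haL1
    have h5 : |A * S - A * (((Nat.totient aL : ℝ) / aL) * (z^(r+1)/((((r:ℕ):ℝ)+1) * tL)))|
        ≤ B * (2 * (theta aL) * z ^ r) := by
      rw [← mul_sub, abs_mul, abs_of_nonneg hA0]
      have hterm : 0 ≤ 2 * ((theta aL : ℝ)) * z ^ r :=
        mul_nonneg (by positivity) (pow_nonneg hz r)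
      calc A * |S - ((Nat.totient aL : ℝ) / aL) * (z^(r+1)/((((r:ℕ):ℝ)+1) * tL))|
          ≤ A * (2 * (theta aL) * z ^ r) := mul_le_mul_of_nonneg_left h4 hA0
        _ ≤ B * (2 * (theta aL) * z ^ r) := mul_le_mul_of_nonneg_right hAB hterm
    have h6 : A * (((Nat.totient aL : ℝ) / aL) * (z^(r+1)/((((r:ℕ):ℝ)+1) * tL)))
        = (1 / ((Nat.factorial (r+1) : ℕ) : ℝ)) *
            (∏ i : Fin (r+1), (Nat.totient (a i) : ℝ) / ((a i : ℝ) * t i)) * z ^ (r+1) := by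
      rw [Fin.prod_univ_castSucc, hAdef]
      simp only [ha'def, ht'def, haLdef, htLdef]
      have hfact : ((Nat.factorial (r+1) : ℕ) : ℝ) = (((r:ℕ):ℝ)+1) * (Nat.factorial r : ℝ) := by
        rw [Nat.factorial_succ]
        push_cast
        ring
      rw [hfact]
      have haL0 : ((a (Fin.last r) : ℕ) : ℝ) ≠ 0 := by
        have := ha (Fin.last r)
        exact Nat.cast_ne_zero.mpr (by omega)
      have htL0 : t (Fin.last r) ≠ 0 := (ht _).ne'
      have hfac0 : (Nat.factorial r : ℝ) ≠ 0 := by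
        exact_mod_cast (Nat.factorial_pos r).ne'
      have hr1 : (((r:ℕ):ℝ)+1) ≠ 0 := by positivity
      generalize (∏ i : Fin r,
        (Nat.totient (a i.castSucc) : ℝ) / ((a i.castSucc : ℝ) * t i.castSucc)) = P
      generalize z ^ (r+1) = X
      field_simp
    have hzz : z * z ^ (r - 1) = z ^ r := by
      rw [← pow_succ']
      congr 1
      omega
    have hfinal : |((F (r+1) t z a).card : ℝ) -
        (1 / ((Nat.factorial (r+1) : ℕ) : ℝ)) *
          (∏ i : Fin (r+1), (Nat.totient (a i) : ℝ) / ((a i : ℝ) * t i)) * z ^ (r+1)|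
        ≤ (C / tL) * z ^ r * Sg + B * (2 * (theta aL) * z ^ r) := by
      rw [← h6]
      have htri := abs_sub_le (((F (r+1) t z a).card : ℝ)) (A * S)
        (A * (((Nat.totient aL : ℝ) / aL) * (z^(r+1)/((((r:ℕ):ℝ)+1) * tL))))
      have hK2 : (K.card : ℝ) * (C * z ^ (r-1) * Sg) ≤ (C / tL) * z ^ r * Sg := by
        have hnn : (0:ℝ) ≤ C * z ^ (r-1) * Sg :=
          mul_nonneg (mul_nonneg hC.le (pow_nonneg hz _)) hSg0
        calc (K.card : ℝ) * (C * z ^ (r-1) * Sg) ≤ (z / tL) * (C * z ^ (r-1) * Sg) :=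
              mul_le_mul_of_nonneg_right hKcard hnn
          _ = (C / tL) * (z * z ^ (r-1)) * Sg := by ring
          _ = (C / tL) * z ^ r * Sg := by rw [hzz]
      linarith [h2, h5, htri]
    have hsgeq : (∑ i : Fin r, (theta (a i.castSucc) : ℝ)) = Sg := rfl
    calc |((F (r+1) t z a).card : ℝ) -
        (1 / ((Nat.factorial (r+1) : ℕ) : ℝ)) *
          (∏ i : Fin (r+1), (Nat.totient (a i) : ℝ) / ((a i : ℝ) * t i)) * z ^ (r+1)|
        ≤ (C / tL) * z ^ r * Sg + B * (2 * (theta aL) * z ^ r) := hfinal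
      _ ≤ (C / tL + 2 * B) * z ^ ((r+1) - 1) * ∑ i : Fin (r+1), (theta (a i) : ℝ) := by
          rw [Fin.sum_univ_castSucc]
          simp only [Nat.add_sub_cancel]
          rw [hsgeq]
          have hzr : (0:ℝ) ≤ z ^ r := pow_nonneg hz r
          nlinarith [mul_nonneg (mul_nonneg (div_nonneg hC.le htL.le) hzr) hθL0,
            mul_nonneg (mul_nonneg hB.le hzr) hSg0]


/-- **Lemma 1.** For fixed `r ≥ 1` and fixed reals `t 1, ..., t r > 0`, uniformly for
real `z ≥ 1` and integers `a 1, ..., a r ≥ 1`, the number of `r`-tuples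
`(k 1, ..., k r)` of positive integers with `k 1 * t 1 + ⋯ + k r * t r ≤ z` and
`gcd (k i) (a i) = 1` for all `i` equals
`(1/r!) (∏ i, φ(a i)/(a i * t i)) z^r + O(z^{r-1} ∑ i, θ(a i))`,
the implied constant depending only on `r` and `t`. -/
theorem coprime_lattice_count_asymptotic
    (r : ℕ) (hr : 1 ≤ r) (t : Fin r → ℝ) (ht : ∀ i, 0 < t i) :
    ∃ C > 0, ∀ z : ℝ, 1 ≤ z → ∀ a : Fin r → ℕ, (∀ i, 1 ≤ a i) →
      |(Set.ncard {k : Fin r → ℕ | (∀ i, 1 ≤ k i) ∧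
            (∑ i, (k i : ℝ) * t i) ≤ z ∧
            ∀ i, Nat.Coprime (k i) (a i)} : ℝ) -
          (1 / (r.factorial : ℝ)) *
            (∏ i, (Nat.totient (a i) : ℝ) / ((a i : ℝ) * t i)) * z ^ r| ≤
        C * z ^ (r - 1) * ∑ i, (theta (a i) : ℝ) := by
  obtain ⟨C, hC, h⟩ := key_induction r hr t ht
  refine ⟨C, hC, ?_⟩
  intro z hz a ha
  have hset : {k : Fin r → ℕ | (∀ i, 1 ≤ k i) ∧
      (∑ i, (k i : ℝ) * t i) ≤ z ∧ ∀ i, Nat.Coprime (k i) (a i)} = ↑(F r t z a) := by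
    ext k
    rw [Finset.mem_coe, mem_F_iff ht]
    simp [Set.mem_setOf_eq]
  rw [hset, Set.ncard_coe_finset]
  exact h z (by linarith) a ha
end

section
/- Let s ≥ 0 be a fixed real number. Then uniformly for real z ≥ 1 and integers a ≥ 1, ∑_{n ≤ z, gcd(n,a)=1} n^s = z^{s+1} φ(a)/((s+1) a) + O(z^s θ(a)), where the implied constant depends only on s. -/
open Finset ArithmeticFunction intervalIntegral

lemma sum_Icc_one_eq_range (f : ℕ → ℝ) (N : ℕ) :
    ∑ m ∈ Finset.Icc 1 N, f m = ∑ i ∈ Finset.range N, f (i+1) := by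
  rw [← Finset.Ico_add_one_right_eq_Icc, Finset.sum_Ico_eq_sum_range]
  simp [add_comm]

lemma sum_Icc_rpow_lower (s : ℝ) (hs : 0 ≤ s) (N : ℕ) :
    (N:ℝ)^(s+1)/(s+1) ≤ ∑ m ∈ Finset.Icc 1 N, (m:ℝ)^s := by
  have hmono : MonotoneOn (fun t : ℝ => t ^ s) (Set.Icc (0:ℝ) (0 + (N:ℕ))) :=
    fun x hx y _ hxy => Real.rpow_le_rpow hx.1 hxy hs
  have h := hmono.integral_le_sum
  rw [zero_add, integral_rpow (Or.inl (by linarith))] at h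
  rw [Real.zero_rpow (by linarith), sub_zero] at h
  refine h.trans_eq ?_
  rw [sum_Icc_one_eq_range (fun m => (m:ℝ)^s)]
  simp

lemma sum_Icc_rpow_upper (s : ℝ) (hs : 0 ≤ s) (N : ℕ) :
    ∑ m ∈ Finset.Icc 1 N, (m:ℝ)^s ≤ (N:ℝ)^(s+1)/(s+1) + (N:ℝ)^s := by
  have hmono : MonotoneOn (fun t : ℝ => t ^ s) (Set.Icc (0:ℝ) (0 + (N:ℕ))) :=
    fun x hx y _ hxy => Real.rpow_le_rpow hx.1 hxy hs
  have h := hmono.sum_le_integral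
  rw [zero_add, integral_rpow (Or.inl (by linarith))] at h
  rw [Real.zero_rpow (by linarith), sub_zero] at h
  simp only [zero_add] at h
  rw [sum_Icc_one_eq_range (fun m => (m:ℝ)^s)]
  have h1 : ∑ i ∈ Finset.range N, (fun m => ((m:ℕ):ℝ)^s) (i+1)
      = ∑ i ∈ Finset.range (N+1), ((i:ℕ):ℝ)^s - ((0:ℕ):ℝ)^s := by
    rw [Finset.sum_range_succ' (fun i => ((i:ℕ):ℝ)^s) N]
    simp
  rw [h1, Finset.sum_range_succ]
  have h0 : (0:ℝ) ≤ (0:ℝ)^s := Real.rpow_nonneg le_rfl s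
  push_cast at h h1 ⊢
  linarith

lemma floor_sum_rpow (s : ℝ) (hs : 0 ≤ s) {x : ℝ} (hx : 0 ≤ x) :
    |(∑ m ∈ Finset.Icc 1 ⌊x⌋₊, (m:ℝ)^s) - x^(s+1)/(s+1)| ≤ x^s := by
  set N := ⌊x⌋₊ with hN
  have hNx : (N:ℝ) ≤ x := Nat.floor_le hx
  have hxN : x < N + 1 := Nat.lt_floor_add_one x
  have hNs : (N:ℝ)^s ≤ x^s := Real.rpow_le_rpow (Nat.cast_nonneg N) hNx hs
  have hdiff : x^(s+1)/(s+1) - (N:ℝ)^(s+1)/(s+1) ≤ x^s := by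
    have heq : x^(s+1)/(s+1) - (N:ℝ)^(s+1)/(s+1) = ∫ t in (N:ℝ)..x, t^s := by
      rw [integral_rpow (Or.inl (by linarith))]; ring
    have hb := intervalIntegral.norm_integral_le_of_norm_le_const
      (C := x^s) (f := fun t : ℝ => t ^ s) (a := (N:ℝ)) (b := x) ?_
    · rw [heq]
      have h1 : |x - (N:ℝ)| ≤ 1 := by rw [abs_of_nonneg (by linarith)]; linarith
      calc ∫ t in (N:ℝ)..x, t^s ≤ ‖∫ t in (N:ℝ)..x, t^s‖ := Real.le_norm_self _
        _ ≤ x^s * |x - (N:ℝ)| := hb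
        _ ≤ x^s * 1 := by
            exact mul_le_mul_of_nonneg_left h1 (Real.rpow_nonneg hx s)
        _ = x^s := mul_one _
    · intro t ht
      rw [Set.uIoc_of_le hNx] at ht
      have ht0 : 0 ≤ t := le_trans (Nat.cast_nonneg N) ht.1.le
      rw [Real.norm_eq_abs, abs_of_nonneg (Real.rpow_nonneg ht0 s)]
      exact Real.rpow_le_rpow ht0 ht.2 hs
  have hdiff0 : (N:ℝ)^(s+1)/(s+1) ≤ x^(s+1)/(s+1) := by
    gcongr
  have hl := sum_Icc_rpow_lower s hs N
  have hu := sum_Icc_rpow_upper s hs N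
  rw [abs_le]
  constructor <;> linarith

lemma sum_moebius_divisors (g : ℕ) (hg : g ≠ 0) :
    ∑ d ∈ g.divisors, ((moebius d : ℤ) : ℝ) = if g = 1 then 1 else 0 := by
  have h := congrArg (fun f : ArithmeticFunction ℤ => f g) moebius_mul_coe_zeta
  simp only [coe_mul_zeta_apply, one_apply] at h
  have h2 : ((∑ i ∈ g.divisors, moebius i : ℤ) : ℝ) = if g = 1 then 1 else 0 := by
    rw [h]; split <;> simp
  rw [← h2]; push_cast; rfl

lemma gcd_divisors_eq (n a : ℕ) (hn : n ≠ 0) (ha : a ≠ 0) :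
    (Nat.gcd n a).divisors = a.divisors.filter (· ∣ n) := by
  ext d
  simp only [Nat.mem_divisors, Finset.mem_filter]
  constructor
  · rintro ⟨hd, -⟩
    exact ⟨⟨hd.trans (Nat.gcd_dvd_right n a), ha⟩, hd.trans (Nat.gcd_dvd_left n a)⟩
  · rintro ⟨⟨hda, -⟩, hdn⟩
    exact ⟨Nat.dvd_gcd hdn hda, Nat.gcd_ne_zero_left hn⟩

lemma moebius_decomp (s : ℝ) (N a : ℕ) (ha : a ≠ 0) :
    ∑ n ∈ (Finset.Icc 1 N).filter (fun n => Nat.Coprime n a), (n:ℝ)^s =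
    ∑ d ∈ a.divisors, ((moebius d : ℤ):ℝ) *
      ∑ m ∈ Finset.Icc 1 (N / d), ((d*m : ℕ):ℝ)^s := by
  rw [Finset.sum_filter]
  have step1 : ∀ n ∈ Finset.Icc 1 N,
      (if Nat.Coprime n a then (n:ℝ)^s else 0) =
      ∑ d ∈ a.divisors.filter (· ∣ n), ((moebius d : ℤ):ℝ) * (n:ℝ)^s := by
    intro n hn
    have hn0 : n ≠ 0 := by
      have := (Finset.mem_Icc.mp hn).1; omega
    rw [← gcd_divisors_eq n a hn0 ha, ← Finset.sum_mul,
      sum_moebius_divisors _ (Nat.gcd_ne_zero_left hn0)]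
    unfold Nat.Coprime
    split <;> simp
  rw [Finset.sum_congr rfl step1]
  simp only [Finset.sum_filter]
  rw [Finset.sum_comm]
  refine Finset.sum_congr rfl fun d hd => ?_
  have hd0 : 0 < d := Nat.pos_of_mem_divisors hd
  rw [← Finset.sum_filter, Finset.mul_sum]
  refine Finset.sum_nbij' (fun n => n / d) (fun m => d * m) ?_ ?_ ?_ ?_ ?_
  · intro n hn
    simp only [Finset.mem_filter, Finset.mem_Icc] at hn
    obtain ⟨⟨h1, h2⟩, hdvd⟩ := hn
    simp only [Finset.mem_Icc]
    exact ⟨Nat.one_le_div_iff hd0 |>.mpr (Nat.le_of_dvd (by omega) hdvd),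
      Nat.div_le_div_right h2⟩
  · intro m hm
    simp only [Finset.mem_Icc] at hm
    simp only [Finset.mem_filter, Finset.mem_Icc]
    refine ⟨⟨Nat.one_le_iff_ne_zero.mpr (Nat.mul_ne_zero (by omega) (by omega)), ?_⟩,
      Dvd.intro m rfl⟩
    calc d * m ≤ d * (N / d) := Nat.mul_le_mul_left d hm.2
      _ ≤ N := Nat.mul_div_le N d
  · intro n hn
    simp only [Finset.mem_filter] at hn
    exact Nat.mul_div_cancel' hn.2
  · intro m hm
    exact Nat.mul_div_cancel_left m hd0
  · intro n hn
    simp only [Finset.mem_filter] at hn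
    rw [Nat.mul_div_cancel' hn.2]

lemma sum_moebius_div_eq_totient_div (a : ℕ) (ha : a ≠ 0) :
    ∑ d ∈ a.divisors, ((moebius d : ℤ):ℝ) / (d:ℝ) = (Nat.totient a : ℝ) / (a : ℝ) := by
  have hinv := (sum_eq_iff_sum_mul_moebius_eq (R := ℝ)
    (f := fun n => (Nat.totient n : ℝ)) (g := fun n => (n : ℝ))).mp ?_
  · have h := hinv a (Nat.pos_of_ne_zero ha)
    rw [Nat.sum_divisorsAntidiagonal (f := fun d e => ((moebius d : ℤ):ℝ) * (e:ℝ))] at h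
    have ha' : (a:ℝ) ≠ 0 := Nat.cast_ne_zero.mpr ha
    rw [eq_div_iff ha', Finset.sum_mul, ← h]
    refine Finset.sum_congr rfl fun d hd => ?_
    have hdvd : d ∣ a := (Nat.mem_divisors.mp hd).1
    have hd0 : (d:ℝ) ≠ 0 := Nat.cast_ne_zero.mpr (Nat.pos_of_mem_divisors hd).ne'
    rw [Nat.cast_div hdvd hd0]
    field_simp
  · intro n hn
    rw [← Nat.cast_sum]
    norm_cast
    exact Nat.sum_totient n

lemma sum_abs_moebius (a : ℕ) :
    ∑ d ∈ a.divisors, |((moebius d : ℤ):ℝ)| = (theta a : ℝ) := by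
  rw [theta, ← Finset.sum_boole]
  refine Finset.sum_congr rfl fun d _ => ?_
  rw [← Int.cast_abs, abs_moebius]
  split <;> simp

/-- For a fixed real `s ≥ 0`, uniformly for real `z ≥ 1` and integers `a ≥ 1`,
`∑_{n ≤ z, gcd(n,a)=1} n^s = z^{s+1} φ(a)/((s+1) a) + O(z^s θ(a))`,
with implied constant depending only on `s`. -/
theorem coprime_power_sum_asymptotic (s : ℝ) (hs : 0 ≤ s) :
    ∃ C > 0, ∀ z : ℝ, 1 ≤ z → ∀ a : ℕ, 1 ≤ a →
      |(∑ n ∈ (Finset.Icc 1 ⌊z⌋₊).filter (fun n => Nat.Coprime n a), (n : ℝ) ^ s) -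
          z ^ (s + 1) * (Nat.totient a : ℝ) / ((s + 1) * (a : ℝ))| ≤
        C * z ^ s * (theta a : ℝ) := by
  refine ⟨1, one_pos, fun z hz a ha => ?_⟩
  have ha0 : a ≠ 0 := by omega
  have hz0 : (0:ℝ) ≤ z := by linarith
  have hs1 : (0:ℝ) < s + 1 := by linarith
  rw [moebius_decomp s ⌊z⌋₊ a ha0]
  have hterm : ∀ d ∈ a.divisors,
      ((moebius d : ℤ):ℝ) * ∑ m ∈ Finset.Icc 1 (⌊z⌋₊ / d), ((d*m:ℕ):ℝ)^s
      = ((moebius d : ℤ):ℝ) * ((d:ℝ)^s * ∑ m ∈ Finset.Icc 1 ⌊z/(d:ℝ)⌋₊, (m:ℝ)^s) := by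
    intro d hd
    congr 1
    rw [Nat.floor_div_natCast z d, Finset.mul_sum]
    refine Finset.sum_congr rfl fun m hm => ?_
    push_cast
    rw [Real.mul_rpow (Nat.cast_nonneg d) (Nat.cast_nonneg m)]
  rw [Finset.sum_congr rfl hterm]
  have hmain : z ^ (s + 1) * (Nat.totient a : ℝ) / ((s + 1) * (a : ℝ))
      = ∑ d ∈ a.divisors, ((moebius d : ℤ):ℝ) * ((d:ℝ)^s * ((z/(d:ℝ))^(s+1)/(s+1))) := by
    have hterm2 : ∀ d ∈ a.divisors,
        ((moebius d : ℤ):ℝ) * ((d:ℝ)^s * ((z/(d:ℝ))^(s+1)/(s+1)))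
        = (z^(s+1)/(s+1)) * (((moebius d : ℤ):ℝ) / (d:ℝ)) := by
      intro d hd
      have hd0 : (0:ℝ) < (d:ℝ) := by exact_mod_cast Nat.pos_of_mem_divisors hd
      have hds : (0:ℝ) < (d:ℝ)^s := Real.rpow_pos_of_pos hd0 s
      rw [Real.div_rpow hz0 hd0.le, Real.rpow_add hd0, Real.rpow_one]
      field_simp
    rw [Finset.sum_congr rfl hterm2, ← Finset.mul_sum,
      sum_moebius_div_eq_totient_div a ha0]
    have ha' : ((a:ℝ)) ≠ 0 := Nat.cast_ne_zero.mpr ha0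
    field_simp
  rw [hmain, ← Finset.sum_sub_distrib]
  have key : ∀ d ∈ a.divisors,
      |((moebius d : ℤ):ℝ) * ((d:ℝ)^s * ∑ m ∈ Finset.Icc 1 ⌊z/(d:ℝ)⌋₊, (m:ℝ)^s)
        - ((moebius d : ℤ):ℝ) * ((d:ℝ)^s * ((z/(d:ℝ))^(s+1)/(s+1)))|
      ≤ |((moebius d : ℤ):ℝ)| * z^s := by
    intro d hd
    have hd0 : (0:ℝ) < (d:ℝ) := by exact_mod_cast Nat.pos_of_mem_divisors hd
    have hzd : (0:ℝ) ≤ z/(d:ℝ) := by positivity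
    have h1 := floor_sum_rpow s hs hzd
    have h3 : (d:ℝ)^s * (z/(d:ℝ))^s = z^s := by
      rw [← Real.mul_rpow hd0.le hzd, mul_div_cancel₀ _ hd0.ne']
    rw [← mul_sub, abs_mul, ← mul_sub, abs_mul, ← h3,
      abs_of_nonneg (Real.rpow_nonneg hd0.le s)]
    gcongr
  calc |∑ d ∈ a.divisors, (((moebius d : ℤ):ℝ) * ((d:ℝ)^s * ∑ m ∈ Finset.Icc 1 ⌊z/(d:ℝ)⌋₊, (m:ℝ)^s)
        - ((moebius d : ℤ):ℝ) * ((d:ℝ)^s * ((z/(d:ℝ))^(s+1)/(s+1))))|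
      ≤ ∑ d ∈ a.divisors, |((moebius d : ℤ):ℝ) * ((d:ℝ)^s * ∑ m ∈ Finset.Icc 1 ⌊z/(d:ℝ)⌋₊, (m:ℝ)^s)
        - ((moebius d : ℤ):ℝ) * ((d:ℝ)^s * ((z/(d:ℝ))^(s+1)/(s+1)))| :=
        Finset.abs_sum_le_sum_abs _ _
    _ ≤ ∑ d ∈ a.divisors, |((moebius d : ℤ):ℝ)| * z^s := Finset.sum_le_sum key
    _ = (∑ d ∈ a.divisors, |((moebius d : ℤ):ℝ)|) * z^s := (Finset.sum_mul ..).symm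
    _ = (theta a : ℝ) * z^s := by rw [sum_abs_moebius]
    _ = 1 * z^s * (theta a : ℝ) := by ring
end

section
/- Let s ≥ -1 be a fixed real number. Then for real z ≥ 3, ∑_{n ≤ z} φ(n) n^s = z^{s+2}/((s+2) ζ(2)) + O(z^{s+1} log z). -/
open Finset Real ArithmeticFunction
open scoped ArithmeticFunction.Moebius ArithmeticFunction.zeta

lemma aux_rpow_diff {t a b : ℝ} (ht : 0 ≤ t) (ha : 0 ≤ a) (hab : a ≤ b) :
    (t + 1) * ((b - a) * a ^ t) ≤ b ^ (t + 1) - a ^ (t + 1) ∧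
      b ^ (t + 1) - a ^ (t + 1) ≤ (t + 1) * ((b - a) * b ^ t) := by
  have ht1 : (0:ℝ) < t + 1 := by linarith
  have hcont : Continuous (fun x : ℝ => x ^ t) := Real.continuous_rpow_const ht
  have hint : IntervalIntegrable (fun x : ℝ => x ^ t) MeasureTheory.volume a b :=
    hcont.intervalIntegrable a b
  have hval : ∫ x in a..b, x ^ t = (b ^ (t + 1) - a ^ (t + 1)) / (t + 1) :=
    integral_rpow (Or.inl (by linarith))
  have hub : ∫ x in a..b, x ^ t ≤ (b - a) * b ^ t := by
    calc ∫ x in a..b, x ^ t ≤ ∫ _x in a..b, b ^ t := by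
          apply intervalIntegral.integral_mono_on hab hint intervalIntegrable_const
          intro x hx
          exact Real.rpow_le_rpow (ha.trans hx.1) hx.2 ht
      _ = (b - a) * b ^ t := by simp [intervalIntegral.integral_const, smul_eq_mul]
  have hlb : (b - a) * a ^ t ≤ ∫ x in a..b, x ^ t := by
    calc (b - a) * a ^ t = ∫ _x in a..b, a ^ t := by
          simp [intervalIntegral.integral_const, smul_eq_mul]
      _ ≤ ∫ x in a..b, x ^ t := by
          apply intervalIntegral.integral_mono_on hab intervalIntegrable_const hint
          intro x hx
          exact Real.rpow_le_rpow ha hx.1 ht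
  rw [hval] at hub hlb
  have e : ∀ x : ℝ, (t + 1) * (x / (t + 1)) = x := fun x => by field_simp
  constructor
  · have h := mul_le_mul_of_nonneg_left hlb ht1.le; rwa [e] at h
  · have h := mul_le_mul_of_nonneg_left hub ht1.le; rwa [e] at h

lemma aux_sum_rpow {t : ℝ} (ht : 0 ≤ t) {y : ℝ} (hy : 0 ≤ y) :
    |(∑ m ∈ Finset.Icc 1 ⌊y⌋₊, (m : ℝ) ^ t) - y ^ (t + 1) / (t + 1)| ≤ y ^ t := by
  set n := ⌊y⌋₊ with hn
  have ht1 : (0:ℝ) < t + 1 := by linarith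
  have hny : (n : ℝ) ≤ y := Nat.floor_le hy
  have hyn : y < n + 1 := Nat.lt_floor_add_one y
  have hIcc : ∑ m ∈ Finset.Icc 1 n, (m:ℝ) ^ t = ∑ i ∈ Finset.range n, ((i:ℝ) + 1) ^ t := by
    rw [← Finset.Ico_add_one_right_eq_Icc, Finset.sum_Ico_eq_sum_range]
    simp [add_comm]
  have tele1 : ∑ i ∈ Finset.range n, (((i:ℝ) + 1) ^ (t+1) - (i:ℝ) ^ (t+1))
      = (n:ℝ) ^ (t+1) - 0 ^ (t+1) := by
    have h := Finset.sum_range_sub (fun i : ℕ => (i:ℝ) ^ (t+1)) n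
    simp only [Nat.cast_add, Nat.cast_one, Nat.cast_zero] at h ⊢
    convert h using 2
  have tele2 : ∑ i ∈ Finset.range n, (((i:ℝ) + 1) ^ t - (i:ℝ) ^ t)
      = (n:ℝ) ^ t - 0 ^ t := by
    have h := Finset.sum_range_sub (fun i : ℕ => (i:ℝ) ^ t) n
    simp only [Nat.cast_add, Nat.cast_one, Nat.cast_zero] at h ⊢
    convert h using 2
  have h0t1 : (0:ℝ) ^ (t+1) = 0 := Real.zero_rpow ht1.ne'
  have lower : (n:ℝ) ^ (t+1) / (t+1) ≤ ∑ i ∈ Finset.range n, ((i:ℝ) + 1) ^ t := by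
    rw [div_le_iff₀ ht1, Finset.sum_mul]
    have : (n:ℝ) ^ (t+1) = ∑ i ∈ Finset.range n, (((i:ℝ) + 1) ^ (t+1) - (i:ℝ) ^ (t+1)) := by
      rw [tele1, h0t1, sub_zero]
    rw [this]
    apply Finset.sum_le_sum
    intro i _
    have h := (aux_rpow_diff (a := (i:ℝ)) (b := (i:ℝ)+1) ht (Nat.cast_nonneg i)
      (by linarith)).2
    simp only [add_sub_cancel_left] at h
    linarith
  have upper : ∑ i ∈ Finset.range n, ((i:ℝ) + 1) ^ t
      ≤ (n:ℝ) ^ (t+1) / (t+1) + (n:ℝ) ^ t := by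
    have key : ∀ i ∈ Finset.range n, ((i:ℝ) + 1) ^ t
        ≤ (((i:ℝ) + 1) ^ (t+1) - (i:ℝ) ^ (t+1)) / (t+1) + (((i:ℝ) + 1) ^ t - (i:ℝ) ^ t) := by
      intro i _
      have h := (aux_rpow_diff (a := (i:ℝ)) (b := (i:ℝ)+1) ht (Nat.cast_nonneg i)
        (by linarith)).1
      simp only [add_sub_cancel_left] at h
      have h' : (i:ℝ) ^ t ≤ (((i:ℝ) + 1) ^ (t+1) - (i:ℝ) ^ (t+1)) / (t+1) := by
        rw [le_div_iff₀ ht1]; linarith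
      linarith
    calc ∑ i ∈ Finset.range n, ((i:ℝ) + 1) ^ t
        ≤ ∑ i ∈ Finset.range n, ((((i:ℝ) + 1) ^ (t+1) - (i:ℝ) ^ (t+1)) / (t+1)
            + (((i:ℝ) + 1) ^ t - (i:ℝ) ^ t)) := Finset.sum_le_sum key
      _ = (n:ℝ) ^ (t+1) / (t+1) + ((n:ℝ) ^ t - 0 ^ t) := by
          rw [Finset.sum_add_distrib, ← Finset.sum_div, tele1, tele2, h0t1, sub_zero]
      _ ≤ (n:ℝ) ^ (t+1) / (t+1) + (n:ℝ) ^ t := by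
          have : (0:ℝ) ≤ (0:ℝ) ^ t := Real.rpow_nonneg le_rfl t
          linarith
  have hy1 : (n:ℝ) ^ (t+1) ≤ y ^ (t+1) := Real.rpow_le_rpow (Nat.cast_nonneg n) hny ht1.le
  have hyt : (n:ℝ) ^ t ≤ y ^ t := Real.rpow_le_rpow (Nat.cast_nonneg n) hny ht
  have hdiff : y ^ (t+1) - (n:ℝ) ^ (t+1) ≤ (t+1) * y ^ t := by
    have h := (aux_rpow_diff (a := (n:ℝ)) (b := y) ht (Nat.cast_nonneg n) hny).2
    have hyt0 : (0:ℝ) ≤ y ^ t := Real.rpow_nonneg hy t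
    have h2 : (t+1) * ((y - (n:ℝ)) * y ^ t) ≤ (t+1) * (1 * y ^ t) :=
      mul_le_mul_of_nonneg_left (mul_le_mul_of_nonneg_right (by linarith) hyt0) ht1.le
    linarith
  rw [hIcc, abs_le]
  constructor
  · have : (y ^ (t+1) - (n:ℝ) ^ (t+1)) / (t+1) ≤ y ^ t := by
      rw [div_le_iff₀ ht1]
      have hyt0 : (0:ℝ) ≤ y ^ t := Real.rpow_nonneg hy t
      nlinarith
    rw [sub_div] at this
    linarith
  · have : (n:ℝ) ^ (t+1) / (t+1) ≤ y ^ (t+1) / (t+1) := by gcongr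
    linarith


lemma aux_swap (N : ℕ) (F : ℕ → ℕ → ℝ) :
    ∑ n ∈ Finset.Icc 1 N, ∑ p ∈ n.divisorsAntidiagonal, F p.1 p.2 =
      ∑ d ∈ Finset.Icc 1 N, ∑ m ∈ Finset.Icc 1 (N / d), F d m := by
  rw [Finset.sum_sigma', Finset.sum_sigma']
  refine Finset.sum_nbij' (fun p => ⟨p.2.1, p.2.2⟩) (fun p => ⟨p.1 * p.2, (p.1, p.2)⟩)
    ?_ ?_ ?_ ?_ ?_
  · rintro ⟨n, d, m⟩ hp
    simp only [Finset.mem_sigma, Finset.mem_Icc, Nat.mem_divisorsAntidiagonal] at hp ⊢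
    obtain ⟨⟨hn1, hnN⟩, hdm, hn0⟩ := hp
    have hd : 0 < d := by
      rcases Nat.eq_zero_or_pos d with rfl | h
      · exfalso; apply hn0; simpa using hdm.symm
      · exact h
    have hm : 0 < m := by
      rcases Nat.eq_zero_or_pos m with rfl | h
      · exfalso; apply hn0; simpa using hdm.symm
      · exact h
    refine ⟨⟨hd, ?_⟩, hm, ?_⟩
    · calc d ≤ d * m := Nat.le_mul_of_pos_right d hm
        _ ≤ N := by omega
    · rw [Nat.le_div_iff_mul_le hd]
      calc m * d = d * m := Nat.mul_comm m d
        _ ≤ N := by omega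
  · rintro ⟨d, m⟩ hp
    simp only [Finset.mem_sigma, Finset.mem_Icc, Nat.mem_divisorsAntidiagonal] at hp ⊢
    obtain ⟨⟨hd1, hdN⟩, hm1, hmN⟩ := hp
    have hdm : d * m ≤ N := by
      have h := (Nat.le_div_iff_mul_le (by omega : 0 < d)).mp hmN
      calc d * m = m * d := Nat.mul_comm d m
        _ ≤ N := h
    have hpos : 0 < d * m := Nat.mul_pos (by omega) (by omega)
    exact ⟨⟨hpos, hdm⟩, trivial, hpos.ne'⟩
  · rintro ⟨n, d, m⟩ hp
    simp only [Finset.mem_sigma, Finset.mem_Icc, Nat.mem_divisorsAntidiagonal] at hp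
    obtain ⟨_, hdm, _⟩ := hp
    simp [hdm]
  · rintro ⟨d, m⟩ _; rfl
  · rintro ⟨n, d, m⟩ _; rfl

lemma aux_totient_eq (n : ℕ) (hn : 0 < n) :
    (n.totient : ℝ) = ∑ p ∈ n.divisorsAntidiagonal, (μ p.1 : ℝ) * (p.2 : ℝ) := by
  have h := (ArithmeticFunction.sum_eq_iff_sum_mul_moebius_eq (R := ℝ)
      (f := fun x => (x.totient : ℝ)) (g := fun x => (x : ℝ))).mp ?_ n hn
  · exact h.symm
  · intro m _
    exact_mod_cast congrArg (Nat.cast : ℕ → ℝ) (Nat.sum_totient m)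

lemma aux_harmonic (N : ℕ) : ∑ d ∈ Finset.Icc 1 N, (d:ℝ)⁻¹ ≤ 1 + Real.log N := by
  have h := harmonic_le_one_add_log N
  rw [harmonic_eq_sum_Icc] at h
  push_cast at h
  exact h


lemma aux_moebius_hasSum :
    HasSum (fun d : ℕ => (μ d : ℝ) / (d : ℝ) ^ 2) (6 / Real.pi ^ 2) := by
  have h2 : (1:ℝ) < (2:ℂ).re := by norm_num
  have hsummable : LSeriesSummable (fun n => ((μ n : ℤ) : ℂ)) 2 :=
    ArithmeticFunction.LSeriesSummable_moebius_iff.mpr h2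
  have hsum : HasSum (fun n => LSeries.term (fun n => ((μ n : ℤ) : ℂ)) 2 n)
      (LSeries (fun n => ((μ n : ℤ) : ℂ)) 2) := hsummable.hasSum
  have hzeta : LSeries (fun n => ((ζ n : ℕ) : ℂ)) 2 = riemannZeta 2 :=
    ArithmeticFunction.LSeries_zeta_eq_riemannZeta h2
  have hmulone : LSeries (fun n => ((ζ n : ℕ) : ℂ)) 2 * LSeries (fun n => ((μ n : ℤ) : ℂ)) 2 = 1 :=
    ArithmeticFunction.LSeries_zeta_mul_Lseries_moebius h2
  have hval : LSeries (fun n => ((μ n : ℤ) : ℂ)) 2 = ((6 / Real.pi ^ 2 : ℝ) : ℂ) := by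
    rw [hzeta, riemannZeta_two] at hmulone
    have hpi : ((Real.pi : ℂ)) ^ 2 / 6 ≠ 0 := by
      simp only [ne_eq, div_eq_zero_iff]
      push_neg
      constructor
      · exact pow_ne_zero 2 (by exact_mod_cast Real.pi_ne_zero)
      · norm_num
    push_cast
    have hpi2 : ((Real.pi : ℂ)) ^ 2 ≠ 0 := pow_ne_zero 2 (by exact_mod_cast Real.pi_ne_zero)
    field_simp at hmulone
    rw [eq_div_iff hpi2]
    linear_combination hmulone
  rw [hval] at hsum
  have hterm : ∀ n : ℕ, LSeries.term (fun n => ((μ n : ℤ) : ℂ)) 2 n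
      = (((μ n : ℝ) / (n : ℝ) ^ 2 : ℝ) : ℂ) := by
    intro n
    rcases eq_or_ne n 0 with rfl | hn
    · simp
    · rw [LSeries.term_of_ne_zero hn]
      have : ((n : ℂ)) ^ (2 : ℂ) = ((n : ℂ)) ^ (2 : ℕ) := by
        rw [show (2:ℂ) = ((2:ℕ):ℂ) by norm_num, Complex.cpow_natCast]
      rw [this]
      push_cast
      ring
  simp_rw [hterm] at hsum
  exact Complex.hasSum_ofReal.mp hsum

set_option maxHeartbeats 1000000 in
lemma aux_moebius_tail (N : ℕ) :
    |(∑ d ∈ Finset.Icc 1 N, (μ d : ℝ) / (d : ℝ) ^ 2) - 6 / Real.pi ^ 2| ≤ 2 / ((N:ℝ) + 1) := by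
  set f : ℕ → ℝ := fun d => (μ d : ℝ) / (d : ℝ) ^ 2 with hf
  have hsum := aux_moebius_hasSum
  have hsummable : Summable f := hsum.summable
  have habs : ∀ i : ℕ, |f i| ≤ ((i:ℝ) ^ 2)⁻¹ := by
    intro i
    rcases eq_or_ne i 0 with rfl | hi
    · simp [hf]
    · have hi2 : (0:ℝ) < (i:ℝ) ^ 2 := by positivity
      rw [hf, abs_div, abs_of_nonneg hi2.le, div_le_iff₀ hi2, inv_mul_cancel₀ hi2.ne']
      have := ArithmeticFunction.abs_moebius_le_one (n := i)
      exact_mod_cast this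
  have hIcc : ∑ d ∈ Finset.Icc 1 N, f d = ∑ d ∈ Finset.range (N+1), f d := by
    have hins : Finset.range (N+1) = insert 0 (Finset.Icc 1 N) := by
      ext x
      simp only [Finset.mem_range, Finset.mem_insert, Finset.mem_Icc]
      omega
    rw [hins, Finset.sum_insert (by simp)]
    simp [hf]
  have key := Summable.sum_add_tsum_nat_add (f := f) (N+1) hsummable
  have htsum : ∑' i, f i = 6 / Real.pi ^ 2 := hsum.tsum_eq
  rw [htsum] at key
  have hshift : Summable (fun i => f (i + (N+1))) := (summable_nat_add_iff (N+1)).mpr hsummable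
  have hg : Summable (fun i : ℕ => ((((i + (N+1)):ℕ):ℝ) ^ 2)⁻¹) := by
    exact (Real.summable_nat_pow_inv.mpr one_lt_two).comp_injective (add_left_injective (N+1))
  have hgsq : ∀ i : ℕ, |f (i + (N+1))| ≤ ((((i + (N+1)):ℕ):ℝ) ^ 2)⁻¹ := fun i => habs _
  have h1 : |∑' i, f (i + (N+1))| ≤ ∑' i : ℕ, ((((i + (N+1)):ℕ):ℝ) ^ 2)⁻¹ := by
    calc |∑' i, f (i + (N+1))| ≤ ∑' i, |f (i + (N+1))| := by
          simpa [Real.norm_eq_abs] using norm_tsum_le_tsum_norm (f := fun i => f (i + (N+1)))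
            (by simpa [Real.norm_eq_abs] using hshift.abs)
      _ ≤ ∑' i : ℕ, ((((i + (N+1)):ℕ):ℝ) ^ 2)⁻¹ := by
          exact Summable.tsum_le_tsum hgsq hshift.abs hg
  have h2 : ∑' i : ℕ, ((((i + (N+1)):ℕ):ℝ) ^ 2)⁻¹ ≤ 2 / ((N:ℝ) + 1) := by
    apply Real.tsum_le_of_sum_range_le (fun i => by positivity)
    intro m
    have hre : ∑ i ∈ Finset.range m, ((((i + (N+1)):ℕ):ℝ) ^ 2)⁻¹
        = ∑ j ∈ Finset.Ioo N (N+1+m), ((j:ℝ) ^ 2)⁻¹ := by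
      rw [← Finset.Ico_add_one_left_eq_Ioo, Finset.sum_Ico_eq_sum_range]
      have : N + 1 + m - (N+1) = m := by omega
      rw [this]
      apply Finset.sum_congr rfl
      intro i _
      congr 2
      push_cast
      ring
    rw [hre]
    have := sum_Ioo_inv_sq_le (α := ℝ) N (N+1+m)
    push_cast at this ⊢
    exact this
  rw [hIcc]
  have : ∑ d ∈ Finset.range (N+1), f d - 6 / Real.pi ^ 2 = -(∑' i, f (i + (N+1))) := by
    linarith [key]
  rw [this, abs_neg]
  calc |∑' i, f (i + (N+1))| ≤ ∑' i : ℕ, ((((i + (N+1)):ℕ):ℝ) ^ 2)⁻¹ := h1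
    _ ≤ 2 / ((N:ℝ) + 1) := h2

/-- For a fixed real `s ≥ -1`, for real `z ≥ 3`,
`∑_{n ≤ z} φ(n) n^s = z^{s+2}/((s+2) ζ(2)) + O(z^{s+1} log z)`, where `ζ(2) = π²/6`. -/
theorem totient_power_sum_asymptotic (s : ℝ) (hs : -1 ≤ s) :
    ∃ C > 0, ∀ z : ℝ, 3 ≤ z →
      |(∑ n ∈ Finset.Icc 1 ⌊z⌋₊, (Nat.totient n : ℝ) * (n : ℝ) ^ s) -
          z ^ (s + 2) / ((s + 2) * (Real.pi ^ 2 / 6))| ≤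
        C * z ^ (s + 1) * Real.log z := by
  refine ⟨5, by norm_num, fun z hz => ?_⟩
  have hz0 : (0:ℝ) < z := by linarith
  set N := ⌊z⌋₊ with hN
  have hNz : (N:ℝ) ≤ z := Nat.floor_le hz0.le
  have hzN : z < (N:ℝ) + 1 := Nat.lt_floor_add_one z
  have hN3 : 3 ≤ N := Nat.le_floor (by exact_mod_cast hz)
  have hN0 : 0 < N := by omega
  have hs1 : (0:ℝ) ≤ s + 1 := by linarith
  have hs2 : (1:ℝ) ≤ s + 2 := by linarith
  have hs2' : (0:ℝ) < s + 2 := by linarith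
  have hzs1 : (0:ℝ) ≤ z ^ (s+1) := Real.rpow_nonneg hz0.le _
  have hzs2 : (0:ℝ) ≤ z ^ (s+2) := Real.rpow_nonneg hz0.le _
  have hlog : 1 ≤ Real.log z := by
    rw [Real.le_log_iff_exp_le hz0]
    calc Real.exp 1 ≤ 2.7182818286 := Real.exp_one_lt_d9.le
      _ ≤ 3 := by norm_num
      _ ≤ z := hz
  -- Step 1 : open up the totient and swap sums
  have step1 : ∑ n ∈ Finset.Icc 1 N, (Nat.totient n : ℝ) * (n:ℝ) ^ s
      = ∑ d ∈ Finset.Icc 1 N, ((μ d : ℝ) * (d:ℝ) ^ s)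
          * ∑ m ∈ Finset.Icc 1 (N / d), (m:ℝ) ^ (s+1) := by
    have h1 : ∀ n ∈ Finset.Icc 1 N, (Nat.totient n : ℝ) * (n:ℝ) ^ s
        = ∑ p ∈ n.divisorsAntidiagonal, ((μ p.1 : ℝ) * (p.1:ℝ) ^ s) * (p.2:ℝ) ^ (s+1) := by
      intro n hn
      rw [Finset.mem_Icc] at hn
      rw [aux_totient_eq n (by omega), Finset.sum_mul]
      apply Finset.sum_congr rfl
      intro p hp
      obtain ⟨hpn, hn0⟩ := Nat.mem_divisorsAntidiagonal.mp hp
      have hp2 : 0 < p.2 := by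
        rcases Nat.eq_zero_or_pos p.2 with h | h
        · exfalso; apply hn0; rw [← hpn, h, mul_zero]
        · exact h
      have hcast : (n:ℝ) = (p.1:ℝ) * (p.2:ℝ) := by exact_mod_cast hpn.symm
      rw [hcast, Real.mul_rpow (Nat.cast_nonneg _) (Nat.cast_nonneg _),
        Real.rpow_add_one (by exact_mod_cast hp2.ne' : ((p.2:ℝ)) ≠ 0)]
      ring
    calc ∑ n ∈ Finset.Icc 1 N, (Nat.totient n : ℝ) * (n:ℝ) ^ s
        = ∑ n ∈ Finset.Icc 1 N, ∑ p ∈ n.divisorsAntidiagonal,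
            ((μ p.1 : ℝ) * (p.1:ℝ) ^ s) * (p.2:ℝ) ^ (s+1) := Finset.sum_congr rfl h1
      _ = ∑ d ∈ Finset.Icc 1 N, ∑ m ∈ Finset.Icc 1 (N / d),
            ((μ d : ℝ) * (d:ℝ) ^ s) * (m:ℝ) ^ (s+1) :=
          aux_swap N (fun d m => ((μ d : ℝ) * (d:ℝ) ^ s) * (m:ℝ) ^ (s+1))
      _ = ∑ d ∈ Finset.Icc 1 N, ((μ d : ℝ) * (d:ℝ) ^ s)
            * ∑ m ∈ Finset.Icc 1 (N / d), (m:ℝ) ^ (s+1) := by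
          exact Finset.sum_congr rfl fun d _ => (Finset.mul_sum _ _ _).symm
  -- Step 2 : per-d estimate of the inner sum
  have hTd : ∀ d ∈ Finset.Icc 1 N,
      |(∑ m ∈ Finset.Icc 1 (N / d), (m:ℝ) ^ (s+1)) - (z/(d:ℝ)) ^ (s+2)/(s+2)|
        ≤ (z/(d:ℝ)) ^ (s+1) := by
    intro d hd
    rw [Finset.mem_Icc] at hd
    have hflo : N / d = ⌊z / (d:ℝ)⌋₊ := by rw [hN, Nat.floor_div_natCast]
    have h := aux_sum_rpow hs1 (div_nonneg hz0.le (Nat.cast_nonneg d))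
    rw [show s + 1 + 1 = s + 2 by ring] at h
    rw [hflo]
    exact h
  -- Step 3 : split into main term and error
  have hdsplit : ∀ d ∈ Finset.Icc 1 N,
      ((μ d : ℝ) * (d:ℝ) ^ s) * ∑ m ∈ Finset.Icc 1 (N / d), (m:ℝ) ^ (s+1)
        = (μ d : ℝ) * (d:ℝ) ^ s
            * ((∑ m ∈ Finset.Icc 1 (N / d), (m:ℝ) ^ (s+1)) - (z/(d:ℝ)) ^ (s+2)/(s+2))
          + z ^ (s+2)/(s+2) * ((μ d : ℝ)/(d:ℝ) ^ 2) := by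
    intro d hd
    rw [Finset.mem_Icc] at hd
    have hd0 : (0:ℝ) < (d:ℝ) := by exact_mod_cast hd.1
    have hds : (0:ℝ) < (d:ℝ) ^ s := Real.rpow_pos_of_pos hd0 s
    have hmain : (d:ℝ) ^ s * (z/(d:ℝ)) ^ (s+2) = z ^ (s+2)/(d:ℝ) ^ 2 := by
      rw [Real.div_rpow hz0.le (Nat.cast_nonneg d)]
      have e1 : (d:ℝ) ^ (s+2) = (d:ℝ) ^ s * (d:ℝ) ^ (2:ℕ) := by
        rw [Real.rpow_add hd0, ← Real.rpow_natCast (d:ℝ) 2]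
        norm_num
      rw [e1]
      field_simp
    have e2 : (d:ℝ) ^ s * ((z/(d:ℝ)) ^ (s+2)/(s+2)) = z ^ (s+2)/(s+2)/(d:ℝ) ^ 2 := by
      rw [mul_div_assoc'] at *
      rw [hmain]
      ring
    linear_combination (μ d : ℝ) * e2
  have step3 : ∑ d ∈ Finset.Icc 1 N, ((μ d : ℝ) * (d:ℝ) ^ s)
          * ∑ m ∈ Finset.Icc 1 (N / d), (m:ℝ) ^ (s+1)
      = (∑ d ∈ Finset.Icc 1 N, (μ d : ℝ) * (d:ℝ) ^ s
            * ((∑ m ∈ Finset.Icc 1 (N / d), (m:ℝ) ^ (s+1)) - (z/(d:ℝ)) ^ (s+2)/(s+2)))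
        + z ^ (s+2)/(s+2) * ∑ d ∈ Finset.Icc 1 N, (μ d : ℝ)/(d:ℝ) ^ 2 := by
    rw [Finset.mul_sum, ← Finset.sum_add_distrib]
    exact Finset.sum_congr rfl hdsplit
  have hid : z ^ (s+2)/((s+2) * (Real.pi ^ 2/6))
      = z ^ (s+2)/(s+2) * (6/Real.pi ^ 2) := by
    have hpi : Real.pi ≠ 0 := Real.pi_ne_zero
    field_simp
  have hsplit : (∑ n ∈ Finset.Icc 1 N, (Nat.totient n : ℝ) * (n:ℝ) ^ s)
        - z ^ (s+2)/((s+2) * (Real.pi ^ 2/6))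
      = (∑ d ∈ Finset.Icc 1 N, (μ d : ℝ) * (d:ℝ) ^ s
            * ((∑ m ∈ Finset.Icc 1 (N / d), (m:ℝ) ^ (s+1)) - (z/(d:ℝ)) ^ (s+2)/(s+2)))
        + z ^ (s+2)/(s+2)
            * ((∑ d ∈ Finset.Icc 1 N, (μ d : ℝ)/(d:ℝ) ^ 2) - 6/Real.pi ^ 2) := by
    rw [step1, step3, hid]
    ring
  -- Bound the first error term
  have hterm : ∀ d ∈ Finset.Icc 1 N,
      |(μ d : ℝ) * (d:ℝ) ^ s
          * ((∑ m ∈ Finset.Icc 1 (N / d), (m:ℝ) ^ (s+1)) - (z/(d:ℝ)) ^ (s+2)/(s+2))|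
        ≤ z ^ (s+1) * (d:ℝ)⁻¹ := by
    intro d hd
    have hd' := hd
    rw [Finset.mem_Icc] at hd'
    have hd0 : (0:ℝ) < (d:ℝ) := by exact_mod_cast hd'.1
    have hds : (0:ℝ) ≤ (d:ℝ) ^ s := (Real.rpow_pos_of_pos hd0 s).le
    have hmu : |(μ d : ℝ)| ≤ 1 := by
      have := ArithmeticFunction.abs_moebius_le_one (n := d)
      exact_mod_cast this
    have e3 : (d:ℝ) ^ s * (z/(d:ℝ)) ^ (s+1) = z ^ (s+1) * (d:ℝ)⁻¹ := by
      rw [Real.div_rpow hz0.le (Nat.cast_nonneg d)]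
      have e4 : (d:ℝ) ^ (s+1) = (d:ℝ) ^ s * (d:ℝ) := Real.rpow_add_one hd0.ne' s
      rw [e4]
      field_simp
    calc |(μ d : ℝ) * (d:ℝ) ^ s
            * ((∑ m ∈ Finset.Icc 1 (N / d), (m:ℝ) ^ (s+1)) - (z/(d:ℝ)) ^ (s+2)/(s+2))|
        = |(μ d : ℝ)| * |(d:ℝ) ^ s|
            * |(∑ m ∈ Finset.Icc 1 (N / d), (m:ℝ) ^ (s+1)) - (z/(d:ℝ)) ^ (s+2)/(s+2)| := by
          rw [abs_mul, abs_mul]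
      _ ≤ 1 * ((d:ℝ) ^ s) * ((z/(d:ℝ)) ^ (s+1)) := by
          apply mul_le_mul
          · rw [abs_of_nonneg hds]
            exact mul_le_mul_of_nonneg_right hmu hds
          · exact hTd d hd
          · exact abs_nonneg _
          · positivity
      _ = z ^ (s+1) * (d:ℝ)⁻¹ := by rw [one_mul, e3]
  have hE1 : |∑ d ∈ Finset.Icc 1 N, (μ d : ℝ) * (d:ℝ) ^ s
        * ((∑ m ∈ Finset.Icc 1 (N / d), (m:ℝ) ^ (s+1)) - (z/(d:ℝ)) ^ (s+2)/(s+2))|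
      ≤ z ^ (s+1) * (1 + Real.log z) := by
    calc |∑ d ∈ Finset.Icc 1 N, (μ d : ℝ) * (d:ℝ) ^ s
          * ((∑ m ∈ Finset.Icc 1 (N / d), (m:ℝ) ^ (s+1)) - (z/(d:ℝ)) ^ (s+2)/(s+2))|
        ≤ ∑ d ∈ Finset.Icc 1 N, |(μ d : ℝ) * (d:ℝ) ^ s
            * ((∑ m ∈ Finset.Icc 1 (N / d), (m:ℝ) ^ (s+1)) - (z/(d:ℝ)) ^ (s+2)/(s+2))| :=
          Finset.abs_sum_le_sum_abs _ _
      _ ≤ ∑ d ∈ Finset.Icc 1 N, z ^ (s+1) * (d:ℝ)⁻¹ := Finset.sum_le_sum hterm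
      _ = z ^ (s+1) * ∑ d ∈ Finset.Icc 1 N, (d:ℝ)⁻¹ := (Finset.mul_sum _ _ _).symm
      _ ≤ z ^ (s+1) * (1 + Real.log N) :=
          mul_le_mul_of_nonneg_left (aux_harmonic N) hzs1
      _ ≤ z ^ (s+1) * (1 + Real.log z) := by
          have : Real.log (N:ℝ) ≤ Real.log z := Real.log_le_log (by positivity) hNz
          nlinarith
  -- Bound the second error term
  have hE2 : |z ^ (s+2)/(s+2)
        * ((∑ d ∈ Finset.Icc 1 N, (μ d : ℝ)/(d:ℝ) ^ 2) - 6/Real.pi ^ 2)|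
      ≤ 2 * z ^ (s+1) := by
    have htail := aux_moebius_tail N
    have h2z : 2/((N:ℝ)+1) ≤ 2/z := div_le_div_of_nonneg_left (by norm_num) hz0 hzN.le
    have e5 : z ^ (s+2) = z ^ (s+1) * z := by
      rw [show s + 2 = s + 1 + 1 by ring, Real.rpow_add_one hz0.ne']
    calc |z ^ (s+2)/(s+2)
          * ((∑ d ∈ Finset.Icc 1 N, (μ d : ℝ)/(d:ℝ) ^ 2) - 6/Real.pi ^ 2)|
        = z ^ (s+2)/(s+2)
            * |(∑ d ∈ Finset.Icc 1 N, (μ d : ℝ)/(d:ℝ) ^ 2) - 6/Real.pi ^ 2| := by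
          rw [abs_mul, abs_of_nonneg (by positivity : (0:ℝ) ≤ z ^ (s+2)/(s+2))]
      _ ≤ z ^ (s+2)/(s+2) * (2/z) := by
          apply mul_le_mul_of_nonneg_left (htail.trans h2z) (by positivity)
      _ ≤ z ^ (s+2) * (2/z) := by
          apply mul_le_mul_of_nonneg_right (div_le_self hzs2 hs2) (by positivity)
      _ = 2 * z ^ (s+1) := by
          rw [e5]
          field_simp
  -- Combine
  rw [hsplit]
  calc |(∑ d ∈ Finset.Icc 1 N, (μ d : ℝ) * (d:ℝ) ^ s
          * ((∑ m ∈ Finset.Icc 1 (N / d), (m:ℝ) ^ (s+1)) - (z/(d:ℝ)) ^ (s+2)/(s+2)))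
        + z ^ (s+2)/(s+2)
            * ((∑ d ∈ Finset.Icc 1 N, (μ d : ℝ)/(d:ℝ) ^ 2) - 6/Real.pi ^ 2)|
      ≤ z ^ (s+1) * (1 + Real.log z) + 2 * z ^ (s+1) := by
        refine (abs_add_le _ _).trans (add_le_add hE1 hE2)
    _ ≤ 5 * z ^ (s+1) * Real.log z := by
        nlinarith [mul_nonneg hzs1 (by linarith : (0:ℝ) ≤ Real.log z - 1)]
end
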